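/- arXiv:1909.00457 — 9 statements merged into one kernel-verified Lean document; each statement's English description precedes it below -/
import Mathlib

section
/- Let m, n, r be positive integers with r dividing m, rn ≤ m, and n ≤ m. Then the ratio r * C(m-n, m/r - n) / C(m, m/r) equals r^{1-n} * ∏_{x=1}^{n-1} (1 - rx/m)/(1 - x/m), where C denotes the binomial coefficient. -/
open Finset

lemma descF_cast (j n : ℕ) (h : n ≤ j) :
    (j.descFactorial n : ℝ) = ∏ i ∈ range n, ((j : ℝ) - i) := by
  rw [Nat.descFactorial_eq_prod_range, Nat.cast_prod]
  exact Finset.prod_congr rfl fun i hi => by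
    rw [Nat.cast_sub ((Nat.le_of_lt_succ (Nat.lt_succ_of_lt (mem_range.mp hi))).trans h)]

theorem monochromatic_prob_eq (m n r : ℕ) (hm : 0 < m) (hn : 0 < n) (hr : 0 < r)
    (hdvd : r ∣ m) (hrn : r * n ≤ m) (hnm : n ≤ m) :
    ((r : ℝ) * ((m - n).choose (m / r - n))) / (m.choose (m / r)) =
      (r : ℝ) ^ (1 - (n : ℤ)) *
        ∏ x ∈ Finset.Icc 1 (n - 1), (1 - (r : ℝ) * x / m) / (1 - (x : ℝ) / m) := by
  obtain ⟨k, hk⟩ := hdvd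
  have hrk : m / r = k := by rw [hk, Nat.mul_div_cancel_left _ hr]
  have hnk : n ≤ k := le_of_mul_le_mul_left (by rw [← hk]; exact hrn) hr
  have hkm : k ≤ m := hrk ▸ Nat.div_le_self m r
  have hm0 : (m : ℝ) ≠ 0 := Nat.cast_ne_zero.mpr hm.ne'
  have hr0 : (r : ℝ) ≠ 0 := Nat.cast_ne_zero.mpr hr.ne'
  have hcmk : (0 : ℝ) < m.choose k := Nat.cast_pos.mpr (Nat.choose_pos hkm)
  have hcmn : (0 : ℝ) < m.choose n := Nat.cast_pos.mpr (Nat.choose_pos hnm)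
  have hmi : ∀ i ∈ Finset.range n, ((m : ℝ) - i) ≠ 0 := fun i hi => by
    have : (i : ℝ) < m := by
      exact_mod_cast lt_of_lt_of_le (mem_range.mp hi) hnm
    linarith
  -- step 1: LHS = r * C(k,n)/C(m,n)
  have hmul : (m.choose k : ℝ) * k.choose n = m.choose n * (m - n).choose (k - n) := by
    exact_mod_cast Nat.choose_mul (n := m) hnk
  have h1 : ((r : ℝ) * ((m - n).choose (m / r - n))) / (m.choose (m / r)) =
      (r : ℝ) * (k.choose n) / (m.choose n) := by
    rw [hrk]
    field_simp
    nlinarith [hmul]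
  -- step 2: C(k,n)/C(m,n) = ∏ (k-i)/(m-i)
  have hdf : ∀ j : ℕ, n ≤ j → (j.choose n : ℝ) = (∏ i ∈ range n, ((j : ℝ) - i)) / n.factorial := by
    intro j hj
    rw [← descF_cast j n hj, Nat.descFactorial_eq_factorial_mul_choose]
    push_cast
    field_simp
  have hdfm : (∏ i ∈ range n, ((m : ℝ) - i)) ≠ 0 := Finset.prod_ne_zero_iff.mpr hmi
  have h2 : ((k.choose n : ℝ)) / (m.choose n) =
      ∏ i ∈ range n, ((k : ℝ) - i) / ((m : ℝ) - i) := by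
    rw [hdf k hnk, hdf m hnm, Finset.prod_div_distrib]
    have hf : (n.factorial : ℝ) ≠ 0 := Nat.cast_ne_zero.mpr n.factorial_ne_zero
    field_simp
  -- split off the i = 0 term
  have hsplit : ∏ i ∈ range n, ((k : ℝ) - i) / ((m : ℝ) - i) =
      ((k : ℝ) / m) * ∏ i ∈ Finset.Ico 1 n, ((k : ℝ) - i) / ((m : ℝ) - i) := by
    rw [Finset.range_eq_Ico, Finset.prod_eq_prod_Ico_succ_bot hn]
    norm_num
  have hIcc : Finset.Icc 1 (n - 1) = Finset.Ico 1 n := by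
    rw [← Finset.Ico_add_one_right_eq_Icc]
    congr 1
    omega
  -- RHS
  have hterm : ∀ x ∈ Finset.Ico 1 n,
      (1 - (r : ℝ) * x / m) / (1 - (x : ℝ) / m) = (r : ℝ) * (((k : ℝ) - x) / ((m : ℝ) - x)) := by
    intro x hx
    obtain ⟨hx1, hx2⟩ := Finset.mem_Ico.mp hx
    have hxm : ((x : ℝ)) < m := by exact_mod_cast lt_of_lt_of_le hx2 hnm
    have hmx : (m : ℝ) - x ≠ 0 := by linarith
    have hmrk : (m : ℝ) = r * k := by exact_mod_cast hk
    field_simp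
    ring_nf
    nlinarith [hmrk]
  have hcard : (Finset.Ico 1 n).card = n - 1 := by simp
  rw [h1, hIcc, Finset.prod_congr rfl hterm, Finset.prod_mul_distrib, Finset.prod_const, hcard]
  have hpow : (r : ℝ) ^ (1 - (n : ℤ)) * (r : ℝ) ^ (n - 1 : ℕ) = 1 := by
    rw [← zpow_natCast (r : ℝ) (n - 1), ← zpow_add₀ hr0]
    have h0 : (1 - (n : ℤ)) + ((n - 1 : ℕ) : ℤ) = 0 := by
      push_cast [Nat.cast_sub hn]
      ring
    rw [h0, zpow_zero]
  have hmrk : (m : ℝ) = r * k := by exact_mod_cast hk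
  have hrkm : (r : ℝ) * ((k : ℝ) / m) = 1 := by
    rw [hmrk]
    have hk0 : (k : ℝ) ≠ 0 := by
      intro h0
      rw [h0, mul_zero] at hmrk
      exact hm0 hmrk
    field_simp
  rw [mul_div_assoc, h2, hsplit, ← mul_assoc, ← mul_assoc, hpow, one_mul, hrkm, one_mul]
end

section
/- Let m, n, r be positive integers with r ≥ 2, r dividing m, and rn ≤ m. Then r * C(m-n, m/r - n) / C(m, m/r) ≤ r^{1-n} * exp(-n(n-1)(r-1)/(2m)). -/
open Finset

theorem monochromatic_prob_le (m n r : ℕ) (hm : 0 < m) (hn : 0 < n) (hr : 2 ≤ r)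
    (hdvd : r ∣ m) (hrn : r * n ≤ m) :
    ((r : ℝ) * ((m - n).choose (m / r - n))) / (m.choose (m / r)) ≤
      (r : ℝ) ^ (1 - (n : ℤ)) *
        Real.exp (-((n : ℝ) * ((n : ℝ) - 1) * ((r : ℝ) - 1)) / (2 * m)) := by
  set k := m / r with hkdef
  have hr0 : 0 < r := lt_of_lt_of_le two_pos hr
  have hkm : r * k = m := Nat.mul_div_cancel' hdvd
  have hnk : n ≤ k := by
    have h1 : r * n ≤ r * k := by rw [hkm]; exact hrn
    exact Nat.le_of_mul_le_mul_left h1 hr0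
  have hkm' : k ≤ m := Nat.div_le_self m r
  have hnm : n ≤ m := le_trans hnk hkm'
  have hrR : (0:ℝ) < r := by exact_mod_cast hr0
  have hmR : (0:ℝ) < m := by exact_mod_cast hm
  have hkmR : (r:ℝ) * k = m := by exact_mod_cast hkm
  have hC : (0:ℝ) < m.choose k := by exact_mod_cast Nat.choose_pos hkm'
  have hDm : (0:ℝ) < m.descFactorial n := by
    have : 0 < m.descFactorial n := by
      rw [Nat.descFactorial_eq_factorial_mul_choose]
      exact Nat.mul_pos (Nat.factorial_pos n) (Nat.choose_pos hnm)
    exact_mod_cast this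
  -- ratio of binomials equals ratio of descending factorials
  have key : ((m - n).choose (k - n) : ℝ) / (m.choose k)
      = (k.descFactorial n : ℝ) / (m.descFactorial n) := by
    rw [div_eq_div_iff (ne_of_gt hC) (ne_of_gt hDm)]
    have hsub : (m - n) - (k - n) = m - k := by omega
    have B1 : (m.choose k : ℝ) * (k.factorial) * ((m-k).factorial) = (m.factorial) := by
      exact_mod_cast Nat.choose_mul_factorial_mul_factorial hkm'
    have B2 : ((m - n).choose (k - n) : ℝ) * ((k-n).factorial) * ((m-k).factorial)
        = ((m-n).factorial) := by
      have A2 := Nat.choose_mul_factorial_mul_factorial (Nat.sub_le_sub_right hkm' n)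
      rw [hsub] at A2
      exact_mod_cast A2
    have B3 : ((m-n).factorial : ℝ) * (m.descFactorial n) = (m.factorial) := by
      exact_mod_cast Nat.factorial_mul_descFactorial hnm
    have B4 : ((k-n).factorial : ℝ) * (k.descFactorial n) = (k.factorial) := by
      exact_mod_cast Nat.factorial_mul_descFactorial hnk
    have hne : (((k-n).factorial : ℝ) * ((m-k).factorial) * ((m-n).factorial)) ≠ 0 := by
      positivity
    apply mul_right_cancel₀ hne
    calc ((m - n).choose (k - n) : ℝ) * (m.descFactorial n)
          * (((k-n).factorial) * ((m-k).factorial) * ((m-n).factorial))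
        = (((m - n).choose (k - n) : ℝ) * ((k-n).factorial) * ((m-k).factorial))
          * (((m-n).factorial) * (m.descFactorial n)) := by ring
      _ = ((m-n).factorial : ℝ) * (m.factorial) := by rw [B2, B3]
      _ = ((m-n).factorial : ℝ) * ((m.choose k : ℝ) * (k.factorial) * ((m-k).factorial)) := by
          rw [B1]
      _ = ((m-n).factorial : ℝ) * ((m.choose k : ℝ)
            * (((k-n).factorial) * (k.descFactorial n)) * ((m-k).factorial)) := by rw [B4]
      _ = (k.descFactorial n : ℝ) * (m.choose k)
          * (((k-n).factorial) * ((m-k).factorial) * ((m-n).factorial)) := by ring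
  -- descending factorials as products
  have hprod : (k.descFactorial n : ℝ) / (m.descFactorial n)
      = ∏ i ∈ range n, (((k:ℝ) - i) / ((m:ℝ) - i)) := by
    rw [Nat.descFactorial_eq_prod_range, Nat.descFactorial_eq_prod_range]
    push_cast
    rw [← prod_div_distrib]
    refine prod_congr rfl fun i hi => ?_
    have hik : i ≤ k := le_trans (le_of_lt (mem_range.1 hi)) hnk
    have him : i ≤ m := le_trans hik hkm'
    rw [Nat.cast_sub hik, Nat.cast_sub him]
  -- bound each factor
  have hfac : ∀ i ∈ range n, ((k:ℝ) - i) / ((m:ℝ) - i)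
      ≤ (1/(r:ℝ)) * Real.exp (-(((r:ℝ) - 1) * i) / m) := by
    intro i hi
    have hin : i < n := mem_range.1 hi
    have hiR : (i:ℝ) < m := by
      have : i < m := lt_of_lt_of_le hin hnm
      exact_mod_cast this
    have hmi : (0:ℝ) < (m:ℝ) - i := by linarith
    have hinn : (0:ℝ) ≤ (i:ℝ) := Nat.cast_nonneg i
    have hr1 : (0:ℝ) ≤ (r:ℝ) - 1 := by
      have : (2:ℝ) ≤ r := by exact_mod_cast hr
      linarith
    have h1 : ((k:ℝ) - i) / ((m:ℝ) - i)
        = (1/(r:ℝ)) * (1 - ((r:ℝ) - 1) * i / ((m:ℝ) - i)) := by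
      field_simp
      nlinarith [hkmR]
    have h2 : 1 - ((r:ℝ) - 1) * i / ((m:ℝ) - i)
        ≤ Real.exp (-(((r:ℝ) - 1) * i / ((m:ℝ) - i))) := by
      have := Real.add_one_le_exp (-(((r:ℝ) - 1) * i / ((m:ℝ) - i)))
      linarith
    have h3 : Real.exp (-(((r:ℝ) - 1) * i / ((m:ℝ) - i)))
        ≤ Real.exp (-(((r:ℝ) - 1) * i) / m) := by
      apply Real.exp_le_exp.2
      rw [neg_div, neg_le_neg_iff]
      apply div_le_div_of_nonneg_left (by positivity) hmi (by linarith)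
    rw [h1]
    have hrinv : (0:ℝ) ≤ 1/(r:ℝ) := by positivity
    exact mul_le_mul_of_nonneg_left (le_trans h2 h3) hrinv
  -- the product bound
  have hprodle : (∏ i ∈ range n, (((k:ℝ) - i) / ((m:ℝ) - i)))
      ≤ ∏ i ∈ range n, ((1/(r:ℝ)) * Real.exp (-(((r:ℝ) - 1) * i) / m)) := by
    apply prod_le_prod _ hfac
    intro i hi
    have hin : i < n := mem_range.1 hi
    have hik : (i:ℝ) ≤ k := by
      have : i ≤ k := le_trans (le_of_lt hin) hnk
      exact_mod_cast this
    have him : (i:ℝ) < m := by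
      have : i < m := lt_of_lt_of_le hin hnm
      exact_mod_cast this
    apply div_nonneg (by linarith) (by linarith)
  -- evaluate the RHS product
  have hsum : (∑ i ∈ range n, (i:ℝ)) = (n:ℝ) * ((n:ℝ) - 1) / 2 := by
    have h := Finset.sum_range_id_mul_two n
    have h2 : ((∑ i ∈ range n, i) * 2 : ℕ) = (n * (n-1) : ℕ) := h
    have h3 : ((∑ i ∈ range n, (i:ℝ)) * 2) = (n:ℝ) * ((n:ℝ) - 1) := by
      have := congrArg (Nat.cast (R := ℝ)) h2
      push_cast [Nat.cast_sub hn] at this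
      exact this
    linarith
  have hprodeq : (∏ i ∈ range n, ((1/(r:ℝ)) * Real.exp (-(((r:ℝ) - 1) * i) / m)))
      = (1/(r:ℝ))^n * Real.exp (-((n:ℝ) * ((n:ℝ) - 1) * ((r:ℝ) - 1)) / (2 * m)) := by
    rw [prod_mul_distrib, prod_const, Finset.card_range, ← Real.exp_sum]
    congr 1
    have : (∑ i ∈ range n, -(((r:ℝ) - 1) * i) / m)
        = (-((r:ℝ) - 1) / m) * ∑ i ∈ range n, (i:ℝ) := by
      rw [mul_sum]
      refine sum_congr rfl fun i _ => ?_
      ring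
    rw [this, hsum]
    field_simp
  -- put everything together
  have hmain : ((m - n).choose (k - n) : ℝ) / (m.choose k)
      ≤ (1/(r:ℝ))^n * Real.exp (-((n:ℝ) * ((n:ℝ) - 1) * ((r:ℝ) - 1)) / (2 * m)) := by
    rw [key, hprod, ← hprodeq]
    exact hprodle
  have hfinal : (r:ℝ) * ((1/(r:ℝ))^n
        * Real.exp (-((n:ℝ) * ((n:ℝ) - 1) * ((r:ℝ) - 1)) / (2 * m)))
      = (r : ℝ) ^ (1 - (n : ℤ))
        * Real.exp (-((n:ℝ) * ((n:ℝ) - 1) * ((r:ℝ) - 1)) / (2 * m)) := by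
    rw [zpow_sub₀ (ne_of_gt hrR), zpow_one, zpow_natCast]
    rw [one_div, inv_pow]
    field_simp
  calc ((r : ℝ) * ((m - n).choose (k - n))) / (m.choose k)
      = (r:ℝ) * (((m - n).choose (k - n) : ℝ) / (m.choose k)) := by ring
    _ ≤ (r:ℝ) * ((1/(r:ℝ))^n
        * Real.exp (-((n:ℝ) * ((n:ℝ) - 1) * ((r:ℝ) - 1)) / (2 * m))) :=
        mul_le_mul_of_nonneg_left hmain (le_of_lt hrR)
    _ = _ := hfinal
end

section
/- Let H = (V, E) be an n-uniform hypergraph with r ≥ 2 colors, where r divides |V|, |V| < n²(r-1)/(2 ln n), |E| ≤ 0.01 (n/ln n)^{(r-1)/r} r^{n-1}, r < (ln n)^{1/5}, and n is sufficiently large. Then H admits an equitable proper r-coloring, i.e., a partition of V into r independent sets of equal size |V|/r. -/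
open Finset

set_option maxHeartbeats 1000000 in
lemma card_equiv_mapsTo_le {β γ : Type} [Fintype β] [Fintype γ]
    (hbc : Fintype.card β = Fintype.card γ) (s : Set β) (t : Set γ) :
    Nat.card {e : β ≃ γ // ∀ b ∈ s, e b ∈ t} ≤
      (Nat.card t).descFactorial (Nat.card s) * Nat.factorial (Fintype.card β - Nat.card s) := by
  classical
  set F : (↥s ↪ ↥t) → Type := fun j => (↥(sᶜ) ≃ ↥((Set.range (fun x : ↥s => ((j x : γ))))ᶜ)) with hF
  have key : ∀ (e : β ≃ γ), (∀ b ∈ s, e b ∈ t) → (Set.range (fun x : ↥s => ((e x : γ)))) = e '' s := by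
    intro e he
    ext y
    simp only [Set.mem_range, Set.mem_image, Subtype.exists]
    constructor
    · rintro ⟨a, ha, rfl⟩; exact ⟨a, ha, rfl⟩
    · rintro ⟨a, ha, rfl⟩; exact ⟨a, ha, rfl⟩
  set Φ : {e : β ≃ γ // ∀ b ∈ s, e b ∈ t} → Σ j : ↥s ↪ ↥t, F j := fun ⟨e, he⟩ =>
    ⟨⟨fun x => ⟨e x, he x x.2⟩, fun x y hxy => Subtype.ext (e.injective (congrArg Subtype.val hxy))⟩,
      ((e.image sᶜ).trans (Equiv.setCongr (by rw [e.image_compl]; exact congrArg compl (key e he).symm)))⟩ with hΦ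
  have hinj : Function.Injective Φ := by
    rintro ⟨e₁, h₁⟩ ⟨e₂, h₂⟩ h
    have h1 : ∀ x : ↥s, e₁ x = e₂ x := by
      intro x
      exact congrArg Subtype.val (DFunLike.congr_fun (congrArg Sigma.fst h) x)
    have h2 : ∀ y : ↥(sᶜ), e₁ y = e₂ y := by
      intro y
      have := congrArg (fun p : Σ j : ↥s ↪ ↥t, F j => ((p.2 y : γ))) h
      exact this
    ext b
    by_cases hb : b ∈ s
    · exact h1 ⟨b, hb⟩
    · exact h2 ⟨b, hb⟩
  have hcard := Nat.card_le_card_of_injective Φ hinj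
  have hs : Nat.card ↥s = Fintype.card ↥s := Nat.card_eq_fintype_card
  have hcompl : Fintype.card ↥(sᶜ) = Fintype.card β - Fintype.card ↥s := Fintype.card_compl_set s
  have hsig : Nat.card (Σ j : ↥s ↪ ↥t, F j) =
      (Fintype.card ↥t).descFactorial (Fintype.card ↥s) * Nat.factorial (Fintype.card β - Fintype.card ↥s) := by
    rw [Nat.card_eq_fintype_card, Fintype.card_sigma]
    have : ∀ j : ↥s ↪ ↥t, Fintype.card (F j) = Nat.factorial (Fintype.card β - Fintype.card ↥s) := by
      intro j
      have hr : Fintype.card ↥((Set.range (fun x : ↥s => ((j x : γ))))ᶜ) = Fintype.card β - Fintype.card ↥s := by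
        rw [Fintype.card_compl_set, ← hbc]
        congr 1
        have hinj' : Function.Injective (fun x : ↥s => ((j x : γ))) := by
          intro a b hab
          exact j.injective (Subtype.ext hab)
        rw [Set.card_range_of_injective hinj']
      have : Fintype.card ↥(sᶜ) = Fintype.card ↥((Set.range (fun x : ↥s => ((j x : γ))))ᶜ) := by
        rw [hcompl, hr]
      rw [show Fintype.card (F j) = Fintype.card (↥(sᶜ) ≃ ↥((Set.range (fun x : ↥s => ((j x : γ))))ᶜ)) from rfl]
      rw [Fintype.card_equiv (Fintype.equivOfCardEq this), hcompl]
    rw [Finset.sum_congr rfl (fun j _ => this j), Finset.sum_const, Finset.card_univ,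
      Fintype.card_embedding_eq, smul_eq_mul]
  rw [hsig] at hcard
  calc Nat.card {e : β ≃ γ // ∀ b ∈ s, e b ∈ t} ≤ _ := hcard
    _ = _ := by rw [hs, Nat.card_eq_fintype_card]

def blockColor (r k : ℕ) (i : Fin (r * k)) : Fin r :=
  ⟨(i : ℕ) / k, by
    rcases Nat.eq_zero_or_pos k with h0 | hk
    · exact absurd i.2 (by simp [h0])
    · exact (Nat.div_lt_iff_lt_mul hk).mpr i.2⟩

lemma block_card (r k : ℕ) (c : Fin r) :
    (Finset.univ.filter (fun i : Fin (r * k) => blockColor r k i = c)).card = k := by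
  have hval : ∀ i : Fin (r * k), (blockColor r k i = c) ↔ ((i : ℕ) / k = (c : ℕ)) := by
    intro i; rw [Fin.ext_iff]; rfl
  rw [Finset.filter_congr (fun i _ => by rw [hval i])]
  rcases Nat.eq_zero_or_pos k with rfl | hk
  · simp
  suffices h : (Finset.univ.filter (fun i : Fin (r * k) => (i : ℕ) / k = (c : ℕ))).card =
      (Finset.Ico ((c : ℕ) * k) ((c : ℕ) * k + k)).card by
    rw [h, Nat.card_Ico]; omega
  apply Finset.card_bij (fun (i : Fin (r * k)) _ => (i : ℕ))
  · intro i hi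
    rw [Finset.mem_filter] at hi
    have h1 := Nat.div_mul_le_self (i : ℕ) k
    have h2 := Nat.lt_div_mul_add (a := (i : ℕ)) hk
    rw [hi.2] at h1 h2
    rw [Finset.mem_Ico]
    exact ⟨h1, h2⟩
  · intro a _ b _ h
    exact Fin.ext h
  · intro b hb
    rw [Finset.mem_Ico] at hb
    have hc1 : (c : ℕ) + 1 ≤ r := c.2
    have hbk : b < r * k := lt_of_lt_of_le hb.2 (by
      calc (c : ℕ) * k + k = ((c : ℕ) + 1) * k := by ring
        _ ≤ r * k := Nat.mul_le_mul_right k hc1)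
    refine ⟨⟨b, hbk⟩, ?_, rfl⟩
    rw [Finset.mem_filter]
    refine ⟨Finset.mem_univ _, Nat.div_eq_of_lt_le hb.1 ?_⟩
    calc b < (c : ℕ) * k + k := hb.2
      _ = ((c : ℕ) + 1) * k := by ring

lemma fiber_card {α : Type} (V : Finset α) (r k : ℕ) (hV : V.card = r * k)
    (e : ↥V ≃ Fin (r * k)) (g : α → Fin r)
    (hg : ∀ v : ↥V, g ↑v = blockColor r k (e v)) (c : Fin r) :
    (V.filter (fun v => g v = c)).card = k := by
  rw [← block_card r k c]
  apply Finset.card_bij (fun v hv => e ⟨v, (Finset.mem_filter.mp hv).1⟩)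
  · intro v hv
    have hv' := Finset.mem_filter.mp hv
    rw [Finset.mem_filter]
    refine ⟨Finset.mem_univ _, ?_⟩
    rw [← hg ⟨v, hv'.1⟩]
    exact hv'.2
  · intro a ha b hb h
    have := e.injective h
    exact congrArg Subtype.val this
  · intro i hi
    rw [Finset.mem_filter] at hi
    refine ⟨(e.symm i : α), ?_, ?_⟩
    · rw [Finset.mem_filter]
      refine ⟨(e.symm i).2, ?_⟩
      rw [hg (e.symm i), e.apply_symm_apply]
      exact hi.2
    · rw [Subtype.coe_eta, e.apply_symm_apply]

set_option maxHeartbeats 1000000 in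
lemma exists_good_equiv {α : Type} (V : Finset α) (E : Finset (Finset α)) (r k n : ℕ)
    (hr : 0 < r) (hV : V.card = r * k)
    (hE : ∀ A ∈ E, A ⊆ V ∧ A.card = n)
    (hlt : E.card * (r * (Nat.descFactorial k n * Nat.factorial (r * k - n))) <
      Nat.factorial (r * k)) :
    ∃ f : α → Fin r,
      (∀ c : Fin r, (V.filter (fun v => f v = c)).card = k) ∧
      (∀ A ∈ E, ¬ ∃ c : Fin r, ∀ v ∈ A, f v = c) := by
  classical
  have hcard : Fintype.card ↥V = r * k := by rw [Fintype.card_coe, hV]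
  obtain ⟨e0⟩ : Nonempty (↥V ≃ Fin (r * k)) := ⟨Fintype.equivFinOfCardEq hcard⟩
  have htotal : Fintype.card (↥V ≃ Fin (r * k)) = Nat.factorial (r * k) := by
    rw [Fintype.card_equiv e0, hcard]
  set Bad : Finset (↥V ≃ Fin (r * k)) := Finset.univ.filter
    (fun e => ∃ A ∈ E, ∃ c : Fin r, ∀ v : ↥V, (v : α) ∈ A → blockColor r k (e v) = c) with hBad
  have hperc : ∀ A ∈ E, ∀ c : Fin r,
      (Finset.univ.filter (fun e : ↥V ≃ Fin (r * k) =>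
        ∀ v : ↥V, (v : α) ∈ A → blockColor r k (e v) = c)).card ≤
      Nat.descFactorial k n * Nat.factorial (r * k - n) := by
    intro A hA c
    set s : Set ↥V := {v : ↥V | (v : α) ∈ A} with hs
    set t : Set (Fin (r * k)) := {i | blockColor r k i = c} with ht
    have hscard : Nat.card s = n := by
      have : s ≃ ↥A :=
        ⟨fun x => ⟨(x : ↥V), x.2⟩, fun a => ⟨⟨(a : α), (hE A hA).1 a.2⟩, a.2⟩,
          fun x => by ext; rfl, fun a => by ext; rfl⟩
      rw [Nat.card_congr this, Nat.card_eq_fintype_card, Fintype.card_coe, (hE A hA).2]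
    have htcard : Nat.card t = k := by
      have h1 : Nat.card t = Fintype.card {i : Fin (r * k) // blockColor r k i = c} :=
        Nat.card_eq_fintype_card
      rw [h1, Fintype.card_subtype]
      exact block_card r k c
    have hcount : (Finset.univ.filter (fun e : ↥V ≃ Fin (r * k) =>
        ∀ v : ↥V, (v : α) ∈ A → blockColor r k (e v) = c)).card =
        Nat.card {e : ↥V ≃ Fin (r * k) // ∀ v ∈ s, e v ∈ t} := by
      rw [Nat.card_eq_fintype_card, Fintype.card_subtype]
      congr 1
    have hbc : Fintype.card ↥V = Fintype.card (Fin (r * k)) := by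
      rw [hcard, Fintype.card_fin]
    have := card_equiv_mapsTo_le hbc s t
    rw [hscard, htcard, hcard] at this
    rw [hcount]
    exact this
  have hBadcard : Bad.card ≤
      E.card * (r * (Nat.descFactorial k n * Nat.factorial (r * k - n))) := by
    have hsub : Bad ⊆ E.biUnion (fun A => Finset.univ.filter
        (fun e : ↥V ≃ Fin (r * k) =>
          ∃ c : Fin r, ∀ v : ↥V, (v : α) ∈ A → blockColor r k (e v) = c)) := by
      intro e he
      rw [hBad, Finset.mem_filter] at he
      obtain ⟨-, A, hA, hc⟩ := he
      exact Finset.mem_biUnion.mpr ⟨A, hA, Finset.mem_filter.mpr ⟨Finset.mem_univ _, hc⟩⟩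
    refine le_trans (Finset.card_le_card hsub) (le_trans Finset.card_biUnion_le ?_)
    calc ∑ A ∈ E, (Finset.univ.filter (fun e : ↥V ≃ Fin (r * k) =>
          ∃ c : Fin r, ∀ v : ↥V, (v : α) ∈ A → blockColor r k (e v) = c)).card
        ≤ ∑ A ∈ E, (r * (Nat.descFactorial k n * Nat.factorial (r * k - n))) := by
          apply Finset.sum_le_sum
          intro A hA
          have hsub2 : Finset.univ.filter (fun e : ↥V ≃ Fin (r * k) =>
              ∃ c : Fin r, ∀ v : ↥V, (v : α) ∈ A → blockColor r k (e v) = c) ⊆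
              (Finset.univ : Finset (Fin r)).biUnion (fun c => Finset.univ.filter
                (fun e : ↥V ≃ Fin (r * k) => ∀ v : ↥V, (v : α) ∈ A → blockColor r k (e v) = c)) := by
            intro e he
            rw [Finset.mem_filter] at he
            obtain ⟨-, c, hc⟩ := he
            exact Finset.mem_biUnion.mpr ⟨c, Finset.mem_univ _,
              Finset.mem_filter.mpr ⟨Finset.mem_univ _, hc⟩⟩
          refine le_trans (Finset.card_le_card hsub2) (le_trans Finset.card_biUnion_le ?_)
          calc ∑ c : Fin r, (Finset.univ.filter (fun e : ↥V ≃ Fin (r * k) =>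
                ∀ v : ↥V, (v : α) ∈ A → blockColor r k (e v) = c)).card
              ≤ ∑ _c : Fin r, (Nat.descFactorial k n * Nat.factorial (r * k - n)) :=
                Finset.sum_le_sum (fun c _ => hperc A hA c)
            _ = r * (Nat.descFactorial k n * Nat.factorial (r * k - n)) := by
                rw [Finset.sum_const, Finset.card_univ, Fintype.card_fin, smul_eq_mul]
      _ = E.card * (r * (Nat.descFactorial k n * Nat.factorial (r * k - n))) := by
          rw [Finset.sum_const, smul_eq_mul]
  have hlt2 : Bad.card < Fintype.card (↥V ≃ Fin (r * k)) := by
    rw [htotal]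
    exact lt_of_le_of_lt hBadcard hlt
  obtain ⟨e, hegood⟩ : ∃ e : ↥V ≃ Fin (r * k), e ∉ Bad := by
    by_contra h
    push_neg at h
    have : Bad = Finset.univ := Finset.eq_univ_iff_forall.mpr h
    rw [this, Finset.card_univ] at hlt2
    exact lt_irrefl _ hlt2
  refine ⟨fun v => if h : v ∈ V then blockColor r k (e ⟨v, h⟩) else ⟨0, hr⟩, ?_, ?_⟩
  · intro c
    apply fiber_card V r k hV e _ (fun v => ?_) c
    show (if h : (v : α) ∈ V then blockColor r k (e ⟨(v : α), h⟩) else ⟨0, hr⟩) = blockColor r k (e v)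
    rw [dif_pos v.2, Subtype.coe_eta]
  · rintro A hA ⟨c, hc⟩
    apply hegood
    rw [hBad, Finset.mem_filter]
    refine ⟨Finset.mem_univ _, A, hA, c, fun v hv => ?_⟩
    have h1 : (if h : (v : α) ∈ V then blockColor r k (e ⟨(v : α), h⟩) else ⟨0, hr⟩) = c :=
      hc (v : α) hv
    rw [dif_pos v.2, Subtype.coe_eta] at h1
    exact h1

open Real in
set_option maxHeartbeats 1000000 in
lemma numeric_key (n r k Ecard : ℕ) (hn : 3 ≤ n) (hr : 2 ≤ r) (hnm : n ≤ r * k)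
    (hm : ((r * k : ℕ) : ℝ) < (n : ℝ) ^ 2 * ((r : ℝ) - 1) / (2 * Real.log n))
    (hE : (Ecard : ℝ) ≤ 0.01 * ((n : ℝ) / Real.log n) ^ (((r : ℝ) - 1) / r) * (r : ℝ) ^ (n - 1)) :
    Ecard * (r * k.descFactorial n) < (r * k).descFactorial n := by
  have hrpos : (0:ℝ) < r := by positivity
  rcases lt_or_ge k n with hkn | hkn
  · rw [Nat.descFactorial_eq_zero_iff_lt.mpr hkn]
    simp only [Nat.mul_zero, Nat.mul_zero]
    exact Nat.pos_of_ne_zero (fun h => absurd (Nat.descFactorial_eq_zero_iff_lt.mp h) (not_lt.mpr hnm))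
  -- real setting
  have hn0 : (0:ℝ) < n := by positivity
  have hL1 : 1 ≤ Real.log n := by
    rw [Real.le_log_iff_exp_le hn0]
    calc Real.exp 1 ≤ 2.7182818286 := le_of_lt Real.exp_one_lt_d9
      _ ≤ (n:ℝ) := le_trans (by norm_num) (show (3:ℝ) ≤ n by exact_mod_cast hn)
  have hL0 : 0 < Real.log n := lt_of_lt_of_le one_pos hL1
  have hLn : Real.log n ≤ (n:ℝ) := le_trans (Real.log_le_sub_one_of_pos hn0) (by linarith)
  set L := Real.log n with hLdef
  have hmR : ((r*k : ℕ) : ℝ) = (r:ℝ) * k := by push_cast; ring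
  have hmpos : (0:ℝ) < (r:ℝ) * k := by
    have : (0:ℝ) < (n:ℝ) := hn0
    have : (n:ℝ) ≤ (r:ℝ)*k := by exact_mod_cast hnm
    linarith
  set m : ℝ := (r:ℝ) * k with hmdef
  -- cast descFactorials to products
  have hPk : ((k.descFactorial n : ℕ) : ℝ) = ∏ i ∈ range n, ((k:ℝ) - i) := by
    rw [Nat.descFactorial_eq_prod_range]
    rw [Nat.cast_prod]
    refine Finset.prod_congr rfl fun i hi => ?_
    have : i ≤ k := le_trans (le_of_lt (mem_range.mp hi)) hkn
    push_cast [Nat.cast_sub this]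
    ring
  have hPm : (((r*k).descFactorial n : ℕ) : ℝ) = ∏ i ∈ range n, (m - i) := by
    rw [Nat.descFactorial_eq_prod_range]
    rw [Nat.cast_prod]
    refine Finset.prod_congr rfl fun i hi => ?_
    have : i ≤ r * k := le_trans (le_of_lt (mem_range.mp hi)) hnm
    push_cast [Nat.cast_sub this]
    ring
  have hmi_pos : ∀ i ∈ range n, (0:ℝ) < m - i := by
    intro i hi
    have h1 : (i:ℝ) < n := by exact_mod_cast mem_range.mp hi
    have h2 : (n:ℝ) ≤ m := by rw [hmdef]; exact_mod_cast hnm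
    linarith
  have hPmpos : (0:ℝ) < ∏ i ∈ range n, (m - i) := Finset.prod_pos hmi_pos
  set B : ℝ := Real.exp (-(((r:ℝ) - 1) * (∑ i ∈ range n, (i:ℝ))) / m) with hBdef
  -- step 1
  have step1 : ∏ i ∈ range n, ((k:ℝ) - i) ≤ (∏ i ∈ range n, (m - i)) * (1/(r:ℝ))^n * B := by
    have per : ∀ i ∈ range n, ((k:ℝ) - i) ≤ (m - i) * (1/(r:ℝ)) * Real.exp (-(((r:ℝ)-1) * i) / m) := by
      intro i hi
      have hmi : (0:ℝ) < m - i := hmi_pos i hi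
      have hid : ((k:ℝ) - i) = (m - i) * (1/(r:ℝ)) * (1 - ((r:ℝ)-1) * i / (m - i)) := by
        field_simp
        ring
      rw [hid]
      have h1 : (1 - ((r:ℝ)-1) * i / (m - i)) ≤ Real.exp (-(((r:ℝ)-1) * i) / (m - i)) := by
        have h := Real.add_one_le_exp (-(((r:ℝ)-1) * i) / (m - i))
        rw [neg_div] at h
        rw [neg_div]
        linarith
      have h2 : Real.exp (-(((r:ℝ)-1) * i) / (m - i)) ≤ Real.exp (-(((r:ℝ)-1) * i) / m) := by
        apply Real.exp_le_exp.mpr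
        rw [neg_div, neg_div, neg_le_neg_iff]
        exact div_le_div_of_nonneg_left
          (mul_nonneg (sub_nonneg.mpr (le_trans one_le_two (by exact_mod_cast hr))) (Nat.cast_nonneg i))
          hmi (by linarith)
      have hnn : (0:ℝ) ≤ (m - i) * (1/(r:ℝ)) := by positivity
      calc (m - i) * (1/(r:ℝ)) * (1 - ((r:ℝ)-1) * i / (m - i))
          ≤ (m - i) * (1/(r:ℝ)) * Real.exp (-(((r:ℝ)-1) * i) / (m - i)) :=
            mul_le_mul_of_nonneg_left h1 hnn
        _ ≤ (m - i) * (1/(r:ℝ)) * Real.exp (-(((r:ℝ)-1) * i) / m) :=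
            mul_le_mul_of_nonneg_left h2 hnn
    calc ∏ i ∈ range n, ((k:ℝ) - i)
        ≤ ∏ i ∈ range n, ((m - i) * (1/(r:ℝ)) * Real.exp (-(((r:ℝ)-1) * i) / m)) := by
          apply Finset.prod_le_prod
          · intro i hi
            have h1 : (i:ℝ) < n := by exact_mod_cast mem_range.mp hi
            have h2 : (n:ℝ) ≤ k := by exact_mod_cast hkn
            linarith
          · exact per
      _ = (∏ i ∈ range n, (m - i)) * (1/(r:ℝ))^n * B := by
          rw [Finset.prod_mul_distrib, Finset.prod_mul_distrib, Finset.prod_const, card_range]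
          congr 1
          rw [hBdef, ← Real.exp_sum]
          congr 1
          rw [← Finset.sum_div]
          congr 1
          rw [Finset.mul_sum, ← Finset.sum_neg_distrib]
  -- step 2
  have hS : (∑ i ∈ range n, (i:ℝ)) = (n:ℝ) * ((n:ℝ) - 1) / 2 := by
    have h2 := Finset.sum_range_id_mul_two n
    have h3 : (((∑ i ∈ range n, i) * 2 : ℕ) : ℝ) = ((n * (n-1) : ℕ) : ℝ) := congrArg (Nat.cast : ℕ → ℝ) h2
    push_cast [Nat.cast_sub (show 1 ≤ n by omega)] at h3
    linarith
  have step2 : B ≤ Real.exp 1 / n := by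
    have hmul : m * (2*L) < (n:ℝ)^2 * ((r:ℝ)-1) := by
      have h := hm; rw [hmR] at h
      exact (lt_div_iff₀ (by positivity)).mp h
    have hn1 : (0:ℝ) ≤ (n:ℝ) - 1 := by
      have : (3:ℝ) ≤ n := by exact_mod_cast hn
      linarith
    have harg : ((n:ℝ)-1)/n * L ≤ (((r:ℝ) - 1) * (∑ i ∈ range n, (i:ℝ))) / m := by
      rw [hS, div_mul_eq_mul_div, div_le_div_iff₀ hn0 hmpos]
      nlinarith [mul_le_mul_of_nonneg_left hmul.le hn1]
    have hBle : B ≤ Real.exp (-(((n:ℝ)-1)/n * L)) := by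
      rw [hBdef]
      apply Real.exp_le_exp.mpr
      rw [neg_div]
      exact neg_le_neg harg
    refine le_trans hBle ?_
    have hsplit : -(((n:ℝ)-1)/n * L) = -L + L/n := by field_simp; ring
    rw [hsplit, Real.exp_add, Real.exp_neg, hLdef, Real.exp_log hn0]
    have hle : Real.exp (Real.log n / n) ≤ Real.exp 1 := by
      apply Real.exp_le_exp.mpr
      rw [div_le_one hn0]
      exact hLn
    calc ((n:ℝ))⁻¹ * Real.exp (Real.log n / n) ≤ ((n:ℝ))⁻¹ * Real.exp 1 :=
          mul_le_mul_of_nonneg_left hle (by positivity)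
      _ = Real.exp 1 / n := by rw [mul_comm, div_eq_mul_inv]
  -- assembly
  set A : ℝ := ∏ i ∈ range n, (m - i) with hA
  have hr0 : (r:ℝ) ≠ 0 := ne_of_gt hrpos
  have hn0' : (n:ℝ) ≠ 0 := ne_of_gt hn0
  have hPk' : ((k.descFactorial n : ℕ):ℝ) ≤ A * (1/(r:ℝ))^n * (Real.exp 1 / n) := by
    rw [hPk]
    refine le_trans step1 ?_
    have h0 : (0:ℝ) ≤ A * (1/(r:ℝ))^n := by positivity
    exact mul_le_mul_of_nonneg_left step2 h0
  have hEn : (Ecard:ℝ) ≤ 0.01 * (n:ℝ) * (r:ℝ)^(n-1) := by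
    refine le_trans hE ?_
    have hx : 1 ≤ (n:ℝ)/L := (one_le_div hL0).mpr hLn
    have h1 : ((n:ℝ)/L) ^ (((r:ℝ)-1)/r) ≤ (n:ℝ)/L := by
      calc ((n:ℝ)/L) ^ (((r:ℝ)-1)/r) ≤ ((n:ℝ)/L) ^ (1:ℝ) :=
            Real.rpow_le_rpow_of_exponent_le hx (by rw [div_le_one hrpos]; linarith)
        _ = (n:ℝ)/L := Real.rpow_one _
    have h2 : (n:ℝ)/L ≤ n := by
      rw [div_le_iff₀ hL0]
      nlinarith
    have hp : (0:ℝ) ≤ (r:ℝ)^(n-1) := by positivity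
    have h3 := le_trans h1 h2
    exact mul_le_mul_of_nonneg_right
      (mul_le_mul_of_nonneg_left h3 (by norm_num : (0:ℝ) ≤ 0.01)) hp
  have hpow : (r:ℝ)^(n-1) * (r:ℝ) * (1/(r:ℝ))^n = 1 := by
    rw [← pow_succ, show n - 1 + 1 = n by omega, ← mul_pow, mul_one_div, div_self hr0, one_pow]
  have goalR : (Ecard:ℝ) * ((r:ℝ) * ((k.descFactorial n : ℕ):ℝ)) < (((r*k).descFactorial n : ℕ):ℝ) := by
    calc (Ecard:ℝ) * ((r:ℝ) * ((k.descFactorial n : ℕ):ℝ))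
        ≤ (0.01 * (n:ℝ) * (r:ℝ)^(n-1)) * ((r:ℝ) * (A * (1/(r:ℝ))^n * (Real.exp 1 / n))) := by
          apply mul_le_mul hEn (mul_le_mul_of_nonneg_left hPk' (le_of_lt hrpos))
            (by positivity) (by positivity)
      _ = 0.01 * Real.exp 1 * A * ((r:ℝ)^(n-1) * (r:ℝ) * (1/(r:ℝ))^n) * ((n:ℝ) / (n:ℝ)) := by
          ring
      _ = 0.01 * Real.exp 1 * A := by rw [hpow, div_self hn0']; ring
      _ < A := by nlinarith [hPmpos, Real.exp_one_lt_d9, Real.exp_pos 1]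
      _ = _ := hPm.symm
  exact_mod_cast goalR

theorem few_vertices_equitable_colorable :
    ∃ N : ℕ, ∀ n : ℕ, N ≤ n →
      ∀ (α : Type) (V : Finset α) (E : Finset (Finset α)) (r : ℕ),
        2 ≤ r →
        (∀ A ∈ E, A ⊆ V ∧ A.card = n) →
        r ∣ V.card →
        ((V.card : ℝ) < (n : ℝ) ^ 2 * ((r : ℝ) - 1) / (2 * Real.log n)) →
        ((E.card : ℝ) ≤ 0.01 * ((n : ℝ) / Real.log n) ^ (((r : ℝ) - 1) / r) * (r : ℝ) ^ (n - 1)) →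
        ((r : ℝ) < (Real.log n) ^ ((1 : ℝ) / 5)) →
        ∃ f : α → Fin r,
          (∀ c : Fin r, (V.filter (fun v => f v = c)).card = V.card / r) ∧
          (∀ A ∈ E, ¬ ∃ c : Fin r, ∀ v ∈ A, f v = c) := by
  refine ⟨3, fun n hn α V E r hr hedges hdvd hVlt hElt _hrlog => ?_⟩
  set k := V.card / r with hk
  have hV : V.card = r * k := (Nat.mul_div_cancel' hdvd).symm
  have hlt : E.card * (r * (Nat.descFactorial k n * Nat.factorial (r * k - n))) <
      Nat.factorial (r * k) := by
    rcases Finset.eq_empty_or_nonempty E with rfl | ⟨A0, hA0⟩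
    · simpa using Nat.factorial_pos (r * k)
    · have hnm : n ≤ r * k := by
        rw [← hV, ← (hedges A0 hA0).2]
        exact Finset.card_le_card (hedges A0 hA0).1
      rw [hV] at hVlt
      have hkey := numeric_key n r k E.card hn hr hnm hVlt hElt
      calc E.card * (r * (Nat.descFactorial k n * Nat.factorial (r * k - n)))
          = (E.card * (r * Nat.descFactorial k n)) * Nat.factorial (r * k - n) := by ring
        _ < Nat.descFactorial (r * k) n * Nat.factorial (r * k - n) :=
            mul_lt_mul_of_pos_right hkey (Nat.factorial_pos _)
        _ = Nat.factorial (r * k) := by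
            rw [mul_comm]
            exact Nat.factorial_mul_descFactorial hnm
  obtain ⟨f, hf1, hf2⟩ := exists_good_equiv V E r k n (by omega) hV hedges hlt
  exact ⟨f, fun c => hf1 c, hf2⟩
end

section
/- Let m, n, r be positive integers, r ≥ 2, r divides m, rn ≤ m, and suppose a finite family E of n-element subsets of an m-element set V satisfies |E| * r^{1-n} * exp(-n(n-1)(r-1)/(2m)) < 1. Then there exists a partition of V into r parts of equal size m/r such that no member of E is contained in a single part. -/
open Finset

lemma stab_card (M : ℕ) (S : Finset (Fin M)) :
    (Finset.univ.filter (fun σ : Equiv.Perm (Fin M) => ∀ x ∈ S, σ x = x)).card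
      = (M - S.card).factorial := by
  classical
  rw [← Fintype.card_subtype]
  have e : {σ : Equiv.Perm (Fin M) // ∀ x ∈ S, σ x = x}
      ≃ Equiv.Perm {x : Fin M // x ∉ S} := by
    have hiff : ∀ f : Equiv.Perm (Fin M),
        (∀ x ∈ S, f x = x) ↔ (∀ a, ¬ (a ∉ S) → f a = a) :=
      fun f => ⟨fun h a ha => h a (not_not.mp ha), fun h x hx => h x (not_not.mpr hx)⟩
    exact (Equiv.subtypeEquivRight hiff).trans
      (Equiv.Perm.subtypeEquivSubtypePerm (fun x => x ∉ S)).symm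
  rw [Fintype.card_congr e, Fintype.card_perm]
  congr 1
  rw [Fintype.card_subtype_compl, Fintype.card_fin, Fintype.card_coe]

lemma bad_card (M nn : ℕ) (S B : Finset (Fin M)) (hS : S.card = nn) :
    (Finset.univ.filter (fun π : Equiv.Perm (Fin M) => ∀ j ∈ S, π j ∈ B)).card
      ≤ B.card.descFactorial nn * (M - nn).factorial := by
  classical
  set bad := Finset.univ.filter
    (fun π : Equiv.Perm (Fin M) => ∀ j ∈ S, π j ∈ B) with hbaddef
  set F : Equiv.Perm (Fin M) → ({x // x ∈ S} → Fin M) := fun π a => π a.1 with hF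
  set t := bad.image F with ht
  have hmem : ∀ π ∈ bad, F π ∈ t := fun π h => Finset.mem_image_of_mem F h
  rw [Finset.card_eq_sum_card_fiberwise hmem]
  have hfiber : ∀ g ∈ t, (bad.filter (fun π => F π = g)).card ≤ (M - nn).factorial := by
    intro g hg
    by_cases hne : (bad.filter (fun π => F π = g)).Nonempty
    · obtain ⟨π₀, hπ₀⟩ := hne
      have h0 : F π₀ = g := (Finset.mem_filter.mp hπ₀).2
      calc (bad.filter (fun π => F π = g)).card
          ≤ (Finset.univ.filter
              (fun σ : Equiv.Perm (Fin M) => ∀ x ∈ S.image π₀, σ x = x)).card := by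
            apply Finset.card_le_card_of_injOn (fun π => π₀.symm.trans π)
            · intro π hπ
              simp only [Finset.mem_coe, Finset.mem_filter, Finset.mem_univ, true_and]
              intro x hx
              obtain ⟨j, hj, rfl⟩ := Finset.mem_image.mp hx
              have h1 : π j = π₀ j := by
                have h2 : F π = g := (Finset.mem_filter.mp hπ).2
                calc π j = F π ⟨j, hj⟩ := rfl
                  _ = g ⟨j, hj⟩ := by rw [h2]
                  _ = F π₀ ⟨j, hj⟩ := by rw [h0]
                  _ = π₀ j := rfl
              simp [Equiv.trans_apply, h1]
            · intro a _ b _ hab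
              apply Equiv.ext
              intro y
              have := DFunLike.congr_fun hab (π₀ y)
              simpa [Equiv.trans_apply] using this
        _ = (M - nn).factorial := by
            rw [stab_card]
            congr 2
            rw [Finset.card_image_of_injective _ π₀.injective, hS]
    · rw [Finset.not_nonempty_iff_eq_empty.mp hne]
      simp
  calc ∑ g ∈ t, (bad.filter (fun π => F π = g)).card
      ≤ t.card * (M - nn).factorial := by
        simpa using Finset.sum_le_card_nsmul t _ _ hfiber
    _ ≤ B.card.descFactorial nn * (M - nn).factorial := by
        apply Nat.mul_le_mul_right
        -- t.card ≤ B.card.descFactorial nn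
        have hinj : t.card ≤ (Finset.univ.image
            (Option.some : ({x // x ∈ S} ↪ {y // y ∈ B}) → _)).card := by
          apply Finset.card_le_card_of_injOn
            (fun g => if h : ∃ e : {x // x ∈ S} ↪ {y // y ∈ B},
                ∀ a, ((e a : {y // y ∈ B}) : Fin M) = g a then some h.choose else none)
          · intro g hg
            obtain ⟨π, hπ, rfl⟩ := Finset.mem_image.mp hg
            have hπ' : ∀ j ∈ S, π j ∈ B := (Finset.mem_filter.mp hπ).2
            have hex : ∃ e : {x // x ∈ S} ↪ {y // y ∈ B},
                ∀ a, ((e a : {y // y ∈ B}) : Fin M) = F π a := by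
              refine ⟨⟨fun a => ⟨π a.1, hπ' a.1 a.2⟩, ?_⟩, fun a => rfl⟩
              intro a b hab
              apply Subtype.ext
              exact π.injective (congrArg Subtype.val hab)
            simp only [dif_pos hex]
            exact Finset.mem_image_of_mem _ (Finset.mem_univ _)
          · intro g1 hg1 g2 hg2 heq
            obtain ⟨π1, hπ1, rfl⟩ := Finset.mem_image.mp hg1
            obtain ⟨π2, hπ2, rfl⟩ := Finset.mem_image.mp hg2
            have hex1 : ∃ e : {x // x ∈ S} ↪ {y // y ∈ B},
                ∀ a, ((e a : {y // y ∈ B}) : Fin M) = F π1 a := by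
              refine ⟨⟨fun a => ⟨π1 a.1, (Finset.mem_filter.mp hπ1).2 a.1 a.2⟩, ?_⟩, fun a => rfl⟩
              intro a b hab
              exact Subtype.ext (π1.injective (congrArg Subtype.val hab))
            have hex2 : ∃ e : {x // x ∈ S} ↪ {y // y ∈ B},
                ∀ a, ((e a : {y // y ∈ B}) : Fin M) = F π2 a := by
              refine ⟨⟨fun a => ⟨π2 a.1, (Finset.mem_filter.mp hπ2).2 a.1 a.2⟩, ?_⟩, fun a => rfl⟩
              intro a b hab
              exact Subtype.ext (π2.injective (congrArg Subtype.val hab))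
            simp only [dif_pos hex1, dif_pos hex2] at heq
            have : hex1.choose = hex2.choose := Option.some_injective _ heq
            funext a
            rw [← hex1.choose_spec a, ← hex2.choose_spec a, this]
        calc t.card ≤ _ := hinj
          _ = Fintype.card ({x // x ∈ S} ↪ {y // y ∈ B}) := by
            rw [Finset.card_image_of_injective _ (Option.some_injective _), Finset.card_univ]
          _ = B.card.descFactorial nn := by
            rw [Fintype.card_embedding_eq, Fintype.card_coe, Fintype.card_coe, hS]

open Finset

lemma ratio_bound (m n r k : ℕ) (hr : 2 ≤ r) (hmk : m = r * k) (hnk : n ≤ k)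
    (hn : 0 < n) :
    (r : ℝ) * (k.descFactorial n : ℝ) ≤
      (r : ℝ) ^ (1 - (n : ℤ)) *
        Real.exp (-((n : ℝ) * ((n : ℝ) - 1) * ((r : ℝ) - 1)) / (2 * m)) *
        (m.descFactorial n : ℝ) := by
  have hr1 : (1:ℝ) ≤ r := by exact_mod_cast Nat.one_le_of_lt hr
  have hrpos : (0:ℝ) < r := lt_of_lt_of_le one_pos hr1
  have hkm : k ≤ m := by
    rw [hmk]
    calc k = 1 * k := (one_mul k).symm
      _ ≤ r * k := Nat.mul_le_mul_right k (Nat.one_le_of_lt hr)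
  have hmn : (0:ℕ) < m := by
    have : 0 < k := lt_of_lt_of_le hn hnk
    rw [hmk]; exact Nat.mul_pos (by omega) this
  have hmpos : (0:ℝ) < m := by exact_mod_cast hmn
  have hmrk : (m:ℝ) = (r:ℝ) * (k:ℝ) := by exact_mod_cast congrArg (Nat.cast : ℕ → ℝ) hmk
  -- cast descFactorials to products
  have hkdf : (k.descFactorial n : ℝ) = ∏ i ∈ range n, ((k:ℝ) - (i:ℝ)) := by
    rw [Nat.descFactorial_eq_prod_range, Nat.cast_prod]
    exact Finset.prod_congr rfl fun i hi => by
      rw [Nat.cast_sub (le_of_lt (lt_of_lt_of_le (Finset.mem_range.mp hi) hnk))]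
  have hmdf : (m.descFactorial n : ℝ) = ∏ i ∈ range n, ((m:ℝ) - (i:ℝ)) := by
    rw [Nat.descFactorial_eq_prod_range, Nat.cast_prod]
    exact Finset.prod_congr rfl fun i hi => by
      rw [Nat.cast_sub (le_of_lt (lt_of_lt_of_le (Finset.mem_range.mp hi) (hnk.trans hkm)))]
  -- termwise inequality
  have hterm : ∀ i ∈ range n, ((k:ℝ) - (i:ℝ)) ≤
      (1 / (r:ℝ)) * Real.exp (-(((r:ℝ) - 1) * (i:ℝ)) / m) * ((m:ℝ) - (i:ℝ)) := by
    intro i hi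
    have hi' : (i:ℝ) ≤ (k:ℝ) := by
      exact_mod_cast le_of_lt (lt_of_lt_of_le (Finset.mem_range.mp hi) hnk)
    have him : (i:ℝ) ≤ (m:ℝ) := by
      exact_mod_cast le_of_lt (lt_of_lt_of_le (Finset.mem_range.mp hi) (hnk.trans hkm))
    have hinn : (0:ℝ) ≤ (i:ℝ) := Nat.cast_nonneg i
    have hexp : 1 - ((r:ℝ) - 1) * i / m ≤ Real.exp (-(((r:ℝ) - 1) * (i:ℝ)) / m) := by
      have := Real.add_one_le_exp (-(((r:ℝ) - 1) * (i:ℝ)) / m)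
      have heq : -(((r:ℝ) - 1) * (i:ℝ)) / m = -(((r:ℝ) - 1) * i / m) := by ring
      rw [heq] at this ⊢
      linarith
    have hstep : (m:ℝ) - (r:ℝ) * i ≤ (1 - ((r:ℝ) - 1) * i / m) * ((m:ℝ) - i) := by
      have hexpand : (1 - ((r:ℝ) - 1) * i / m) * ((m:ℝ) - i)
          = (m:ℝ) - (r:ℝ) * i + ((r:ℝ) - 1) * i ^ 2 / m := by
        field_simp
        ring
      rw [hexpand]
      have : (0:ℝ) ≤ ((r:ℝ) - 1) * i ^ 2 / m :=
        div_nonneg (mul_nonneg (by linarith) (sq_nonneg _)) hmpos.le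
      linarith
    have hstep2 : (1 - ((r:ℝ) - 1) * i / m) * ((m:ℝ) - i)
        ≤ Real.exp (-(((r:ℝ) - 1) * (i:ℝ)) / m) * ((m:ℝ) - i) :=
      mul_le_mul_of_nonneg_right hexp (by linarith)
    have key : (r:ℝ) * ((k:ℝ) - i) ≤ Real.exp (-(((r:ℝ) - 1) * (i:ℝ)) / m) * ((m:ℝ) - i) := by
      have : (r:ℝ) * ((k:ℝ) - i) ≤ (m:ℝ) - (r:ℝ) * i := by
        rw [hmrk]; nlinarith
      linarith
    calc (k:ℝ) - i = (1 / (r:ℝ)) * ((r:ℝ) * ((k:ℝ) - i)) := by field_simp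
      _ ≤ (1 / (r:ℝ)) * (Real.exp (-(((r:ℝ) - 1) * (i:ℝ)) / m) * ((m:ℝ) - i)) := by
          apply mul_le_mul_of_nonneg_left key (by positivity)
      _ = (1 / (r:ℝ)) * Real.exp (-(((r:ℝ) - 1) * (i:ℝ)) / m) * ((m:ℝ) - i) := by ring
  have hnonneg : ∀ i ∈ range n, (0:ℝ) ≤ (k:ℝ) - i := by
    intro i hi
    have : (i:ℝ) ≤ (k:ℝ) := by
      exact_mod_cast le_of_lt (lt_of_lt_of_le (Finset.mem_range.mp hi) hnk)
    linarith
  have hprod : (k.descFactorial n : ℝ) ≤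
      ∏ i ∈ range n, ((1 / (r:ℝ)) * Real.exp (-(((r:ℝ) - 1) * (i:ℝ)) / m) * ((m:ℝ) - i)) := by
    rw [hkdf]; exact Finset.prod_le_prod hnonneg hterm
  -- compute RHS product
  have hsum : (∑ i ∈ range n, (i:ℝ)) = (n:ℝ) * ((n:ℝ) - 1) / 2 := by
    have h2 : ((∑ i ∈ range n, i) : ℕ) * 2 = n * (n - 1) := Finset.sum_range_id_mul_two n
    have h3 : ((∑ i ∈ range n, i : ℕ) : ℝ) * 2 = (n:ℝ) * ((n:ℝ) - 1) := by
      have : (((∑ i ∈ range n, i) * 2 : ℕ) : ℝ) = ((n * (n-1) : ℕ) : ℝ) := by rw [h2]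
      push_cast [Nat.cast_sub hn] at this ⊢
      linarith [this]
    have h4 : ((∑ i ∈ range n, i : ℕ) : ℝ) = ∑ i ∈ range n, (i:ℝ) := by push_cast; rfl
    linarith [h3, h4]
  have hsum2 : (∑ i ∈ range n, -(((r:ℝ) - 1) * (i:ℝ)) / m)
      = -((n : ℝ) * ((n : ℝ) - 1) * ((r : ℝ) - 1)) / (2 * m) := by
    have : ∀ i ∈ range n, -(((r:ℝ) - 1) * (i:ℝ)) / m = (i:ℝ) * (-((r:ℝ) - 1) / m) := by
      intro i _; ring
    rw [Finset.sum_congr rfl this, ← Finset.sum_mul, hsum]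
    field_simp
  have hrhs : ∏ i ∈ range n, ((1 / (r:ℝ)) * Real.exp (-(((r:ℝ) - 1) * (i:ℝ)) / m) * ((m:ℝ) - i))
      = (1 / (r:ℝ)) ^ n * Real.exp (-((n : ℝ) * ((n : ℝ) - 1) * ((r : ℝ) - 1)) / (2 * m)) *
        (m.descFactorial n : ℝ) := by
    rw [Finset.prod_mul_distrib, Finset.prod_mul_distrib, Finset.prod_const,
      ← Real.exp_sum, hsum2, hmdf, Finset.card_range]
  -- assemble
  have hmain : (k.descFactorial n : ℝ) ≤
      (1 / (r:ℝ)) ^ n * Real.exp (-((n : ℝ) * ((n : ℝ) - 1) * ((r : ℝ) - 1)) / (2 * m)) *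
        (m.descFactorial n : ℝ) := by rw [← hrhs]; exact hprod
  have hfinal := mul_le_mul_of_nonneg_left hmain (le_of_lt hrpos)
  calc (r:ℝ) * (k.descFactorial n : ℝ) ≤ _ := hfinal
    _ = (r : ℝ) ^ (1 - (n : ℤ)) *
        Real.exp (-((n : ℝ) * ((n : ℝ) - 1) * ((r : ℝ) - 1)) / (2 * m)) *
        (m.descFactorial n : ℝ) := by
      have hrne : (r:ℝ) ≠ 0 := ne_of_gt hrpos
      rw [show (1 - (n:ℤ)) = 1 + (-(n:ℤ)) by ring, zpow_add₀ hrne, zpow_one, zpow_neg,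
        zpow_natCast]
      rw [one_div, inv_pow]
      ring

theorem first_moment_equitable (α : Type) (V : Finset α) (E : Finset (Finset α))
    (m n r : ℕ) (hVm : V.card = m) (hm : 0 < m) (hn : 0 < n) (hr : 2 ≤ r)
    (hdvd : r ∣ m) (hrn : r * n ≤ m)
    (hE : ∀ A ∈ E, A ⊆ V ∧ A.card = n)
    (hbound : (E.card : ℝ) * (r : ℝ) ^ (1 - (n : ℤ)) *
        Real.exp (-((n : ℝ) * ((n : ℝ) - 1) * ((r : ℝ) - 1)) / (2 * m)) < 1) :
    ∃ f : α → Fin r,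
      (∀ c : Fin r, (V.filter (fun v => f v = c)).card = m / r) ∧
      (∀ A ∈ E, ¬ ∃ c : Fin r, ∀ v ∈ A, f v = c) := by
  classical
  set k := m / r with hkdef
  have hmk : m = r * k := (Nat.mul_div_cancel' hdvd).symm
  have hrpos : 0 < r := by omega
  have hnk : n ≤ k := Nat.le_of_mul_le_mul_left (by rw [← hmk]; exact hrn) hrpos
  have hkpos : 0 < k := lt_of_lt_of_le hn hnk
  have hkm : k ≤ m := by
    rw [hmk]
    calc k = 1 * k := (one_mul k).symm
      _ ≤ r * k := Nat.mul_le_mul_right k (by omega)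
  have hnm : n ≤ m := hnk.trans hkm
  let eV : {x // x ∈ V} ≃ Fin m := V.equivFin.trans (finCongr hVm)
  have hblock : ∀ j : Fin m, j.1 / k < r := by
    intro j
    apply (Nat.div_lt_iff_lt_mul hkpos).mpr
    calc j.1 < m := j.2
      _ = r * k := hmk
  let block : Fin m → Fin r := fun j => ⟨j.1 / k, hblock j⟩
  let Bc : Fin r → Finset (Fin m) := fun c => Finset.univ.filter (fun j => block j = c)
  have hlt : ∀ (c : Fin r) (i : Fin k), k * c.1 + i.1 < m := by
    intro c i
    calc k * c.1 + i.1 < k * c.1 + k := by omega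
      _ = k * (c.1 + 1) := by ring
      _ ≤ k * r := Nat.mul_le_mul_left k c.2
      _ = m := by rw [hmk, Nat.mul_comm]
  have hBc : ∀ c : Fin r, (Bc c).card = k := by
    intro c
    have hinj : Function.Injective (fun i : Fin k => (⟨k * c.1 + i.1, hlt c i⟩ : Fin m)) := by
      intro i1 i2 h
      have := congrArg Fin.val h
      simp only at this
      exact Fin.ext (by omega)
    have himg : Bc c = Finset.univ.image (fun i : Fin k => (⟨k * c.1 + i.1, hlt c i⟩ : Fin m)) := by
      ext j
      simp only [Bc, Finset.mem_filter, Finset.mem_univ, true_and, Finset.mem_image]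
      constructor
      · intro hj
        have hc : j.1 / k = c.1 := congrArg Fin.val hj
        refine ⟨⟨j.1 % k, Nat.mod_lt _ hkpos⟩, ?_⟩
        apply Fin.ext
        show k * c.1 + j.1 % k = j.1
        rw [← hc]
        exact Nat.div_add_mod j.1 k
      · rintro ⟨i, rfl⟩
        apply Fin.ext
        show (k * c.1 + i.1) / k = c.1
        rw [Nat.mul_add_div hkpos, Nat.div_eq_of_lt i.2, Nat.add_zero]
    rw [himg, Finset.card_image_of_injective _ hinj, Finset.card_univ, Fintype.card_fin]
  set fcol : Equiv.Perm (Fin m) → α → Fin r :=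
    (fun π v => if h : v ∈ V then block (π (eV ⟨v, h⟩)) else ⟨0, by omega⟩) with hfcol
  -- fibers all have size k
  have hfiber : ∀ (π : Equiv.Perm (Fin m)) (c : Fin r),
      (V.filter (fun v => fcol π v = c)).card = k := by
    intro π c
    rw [← hBc c]
    apply Finset.card_bij (fun v hv => π (eV ⟨v, (Finset.mem_filter.mp hv).1⟩))
    · intro v hv
      have h1 := (Finset.mem_filter.mp hv).1
      have h2 := (Finset.mem_filter.mp hv).2
      simp only [hfcol] at h2
      rw [dif_pos h1] at h2
      simp only [Bc, Finset.mem_filter, Finset.mem_univ, true_and]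
      exact h2
    · intro a ha b hb hab
      have := eV.injective (π.injective hab)
      exact congrArg Subtype.val this
    · intro j hj
      have hjc : block j = c := by
        simpa only [Bc, Finset.mem_filter, Finset.mem_univ, true_and] using hj
      refine ⟨(eV.symm (π.symm j)).1, ?_, ?_⟩
      · refine Finset.mem_filter.mpr ⟨(eV.symm (π.symm j)).2, ?_⟩
        simp only [hfcol]
        rw [dif_pos (eV.symm (π.symm j)).2, Subtype.coe_eta, Equiv.apply_symm_apply,
          Equiv.apply_symm_apply]
        exact hjc
      · rw [Subtype.coe_eta, Equiv.apply_symm_apply, Equiv.apply_symm_apply]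
  -- the key existence of a good permutation
  have key : ∃ π : Equiv.Perm (Fin m), ∀ A ∈ E, ¬ ∃ c : Fin r, ∀ v ∈ A, fcol π v = c := by
    by_contra hcon
    push_neg at hcon
    -- hcon : ∀ π, ∃ A ∈ E, ∃ c, ∀ v ∈ A, fcol π v = c
    set AV : Finset α → Finset (Fin m) :=
      (fun A => (A ∩ V).attach.image (fun a => eV ⟨a.1, (Finset.mem_inter.mp a.2).2⟩)) with hAV
    have hAVcard : ∀ A ∈ E, (AV A).card = n := by
      intro A hA
      have hinj : Function.Injective
          (fun a : {x // x ∈ A ∩ V} => eV ⟨a.1, (Finset.mem_inter.mp a.2).2⟩) := by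
        intro a b hab
        exact Subtype.ext (Subtype.mk_eq_mk.mp (eV.injective hab))
      simp only [hAV]
      rw [Finset.card_image_of_injective _ hinj, Finset.card_attach,
        Finset.inter_eq_left.mpr (hE A hA).1, (hE A hA).2]
    have hsub : (Finset.univ : Finset (Equiv.Perm (Fin m))) ⊆
        E.biUnion (fun A => Finset.univ.biUnion (fun c : Fin r =>
          Finset.univ.filter (fun π : Equiv.Perm (Fin m) => ∀ j ∈ AV A, π j ∈ Bc c))) := by
      intro π _
      obtain ⟨A, hA, c, hAc⟩ := hcon π
      refine Finset.mem_biUnion.mpr ⟨A, hA, Finset.mem_biUnion.mpr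
        ⟨c, Finset.mem_univ c, ?_⟩⟩
      refine Finset.mem_filter.mpr ⟨Finset.mem_univ _, ?_⟩
      intro j hj
      simp only [hAV, Finset.mem_image] at hj
      obtain ⟨a, -, rfl⟩ := hj
      have haA : a.1 ∈ A := (Finset.mem_inter.mp a.2).1
      have haV : a.1 ∈ V := (Finset.mem_inter.mp a.2).2
      have hfa := hAc a.1 haA
      simp only [hfcol] at hfa
      rw [dif_pos haV] at hfa
      simp only [Bc, Finset.mem_filter, Finset.mem_univ, true_and]
      exact hfa
    -- counting
    have h1 : (Finset.univ : Finset (Equiv.Perm (Fin m))).card ≤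
        E.card * (r * (k.descFactorial n * (m - n).factorial)) := by
      refine le_trans (Finset.card_le_card hsub) ?_
      refine le_trans Finset.card_biUnion_le ?_
      refine le_trans (Finset.sum_le_sum fun A _ => Finset.card_biUnion_le) ?_
      have hb : ∀ A ∈ E, ∀ c : Fin r,
          (Finset.univ.filter (fun π : Equiv.Perm (Fin m) => ∀ j ∈ AV A, π j ∈ Bc c)).card
            ≤ k.descFactorial n * (m - n).factorial := by
        intro A hA c
        have := bad_card m n (AV A) (Bc c) (hAVcard A hA)
        rwa [hBc c] at this
      calc ∑ A ∈ E, ∑ c : Fin r,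
            (Finset.univ.filter (fun π : Equiv.Perm (Fin m) => ∀ j ∈ AV A, π j ∈ Bc c)).card
          ≤ ∑ A ∈ E, ∑ _c : Fin r, k.descFactorial n * (m - n).factorial := by
            refine Finset.sum_le_sum fun A hA => Finset.sum_le_sum fun c _ => hb A hA c
        _ = E.card * (r * (k.descFactorial n * (m - n).factorial)) := by
            simp [Finset.sum_const, Finset.card_univ, Fintype.card_fin, mul_assoc]
    have h2 : m.factorial ≤ E.card * (r * (k.descFactorial n * (m - n).factorial)) := by
      rwa [Finset.card_univ, Fintype.card_perm, Fintype.card_fin] at h1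
    have h3 : m.descFactorial n * (m - n).factorial ≤
        E.card * r * k.descFactorial n * (m - n).factorial := by
      calc m.descFactorial n * (m - n).factorial = m.factorial := by
            rw [mul_comm, Nat.factorial_mul_descFactorial hnm]
        _ ≤ E.card * (r * (k.descFactorial n * (m - n).factorial)) := h2
        _ = E.card * r * k.descFactorial n * (m - n).factorial := by ring
    have h4 : m.descFactorial n ≤ E.card * r * k.descFactorial n :=
      Nat.le_of_mul_le_mul_right h3 (Nat.factorial_pos _)
    -- to reals
    have h5 : (m.descFactorial n : ℝ) ≤ (E.card : ℝ) * (r : ℝ) * (k.descFactorial n : ℝ) := by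
      exact_mod_cast h4
    have h6 := ratio_bound m n r k hr hmk hnk hn
    have h7 : (E.card : ℝ) * ((r : ℝ) * (k.descFactorial n : ℝ)) ≤
        (E.card : ℝ) * ((r : ℝ) ^ (1 - (n : ℤ)) *
          Real.exp (-((n : ℝ) * ((n : ℝ) - 1) * ((r : ℝ) - 1)) / (2 * m)) *
          (m.descFactorial n : ℝ)) :=
      mul_le_mul_of_nonneg_left h6 (Nat.cast_nonneg _)
    have hmdfpos : (0 : ℝ) < (m.descFactorial n : ℝ) := by
      have hfac := Nat.factorial_pos m
      rw [← Nat.factorial_mul_descFactorial hnm] at hfac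
      have : 0 < m.descFactorial n := by
        rcases Nat.eq_zero_or_pos (m.descFactorial n) with h | h
        · rw [h, Nat.mul_zero] at hfac; exact absurd hfac (lt_irrefl 0)
        · exact h
      exact_mod_cast this
    have h8 : (E.card : ℝ) * ((r : ℝ) ^ (1 - (n : ℤ)) *
          Real.exp (-((n : ℝ) * ((n : ℝ) - 1) * ((r : ℝ) - 1)) / (2 * m)) *
          (m.descFactorial n : ℝ)) < (m.descFactorial n : ℝ) := by
      calc (E.card : ℝ) * ((r : ℝ) ^ (1 - (n : ℤ)) *
          Real.exp (-((n : ℝ) * ((n : ℝ) - 1) * ((r : ℝ) - 1)) / (2 * m)) *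
          (m.descFactorial n : ℝ))
          = ((E.card : ℝ) * (r : ℝ) ^ (1 - (n : ℤ)) *
            Real.exp (-((n : ℝ) * ((n : ℝ) - 1) * ((r : ℝ) - 1)) / (2 * m))) *
            (m.descFactorial n : ℝ) := by ring
        _ < 1 * (m.descFactorial n : ℝ) := mul_lt_mul_of_pos_right hbound hmdfpos
        _ = (m.descFactorial n : ℝ) := one_mul _
    have h9 : (E.card : ℝ) * (r : ℝ) * (k.descFactorial n : ℝ)
        = (E.card : ℝ) * ((r : ℝ) * (k.descFactorial n : ℝ)) := by ring
    linarith
  obtain ⟨π, hπ⟩ := key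
  exact ⟨fcol π, fun c => hfiber π c, hπ⟩
end

section
/- Let n ≥ 2, r ≥ 2 be integers with r < (ln n)^{1/5}, let p = ((r-1)/r) * ln(n/ln n)/n, and let k be an integer with 1 ≤ k ≤ r. Then (p/(r-1))^{k-1} * r^{-k(n-2)-2} * exp((n-2)(-pk + (k-1)pr/(r-1))) * exp(2p/(r-1)) ≤ 2 * (ln n / n)^{k(r-1)/r} * r^{-k(n-1)-1}, for all sufficiently large n. -/
theorem chain_prob_bound :
    ∃ N : ℕ, ∀ n : ℕ, N ≤ n → ∀ r k : ℕ,
      2 ≤ r → (r : ℝ) < (Real.log n) ^ ((1 : ℝ) / 5) → 1 ≤ k → k ≤ r →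
      (((((r : ℝ) - 1) / r) * Real.log ((n : ℝ) / Real.log n) / n) / ((r : ℝ) - 1)) ^ (k - 1) *
          (r : ℝ) ^ (-((k * (n - 2) : ℕ) : ℤ) - 2) *
          Real.exp (((n : ℝ) - 2) *
            (-((((r : ℝ) - 1) / r) * Real.log ((n : ℝ) / Real.log n) / n * k) +
              ((k : ℝ) - 1) * ((((r : ℝ) - 1) / r) * Real.log ((n : ℝ) / Real.log n) / n) * r /
                ((r : ℝ) - 1))) *
          Real.exp (2 * ((((r : ℝ) - 1) / r) * Real.log ((n : ℝ) / Real.log n) / n) / ((r : ℝ) - 1)) ≤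
        2 * (Real.log n / (n : ℝ)) ^ ((k : ℝ) * ((r : ℝ) - 1) / r) *
          (r : ℝ) ^ (-((k * (n - 1) : ℕ) : ℤ) - 1) := by
  refine ⟨100, fun n hn r k hr _ hk1 hkr => ?_⟩
  have hn2 : 2 ≤ n := le_trans (by norm_num) hn
  have hnR : (100:ℝ) ≤ (n:ℝ) := by exact_mod_cast hn
  have hn0 : (0:ℝ) < (n:ℝ) := by linarith
  have hrR : (2:ℝ) ≤ (r:ℝ) := by exact_mod_cast hr
  have hkR : (1:ℝ) ≤ (k:ℝ) := by exact_mod_cast hk1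
  have hkrR : (k:ℝ) ≤ (r:ℝ) := by exact_mod_cast hkr
  have hr0 : (0:ℝ) < (r:ℝ) := by linarith
  have hr1 : (0:ℝ) < (r:ℝ) - 1 := by linarith
  set L := Real.log (n:ℝ) with hLdef
  have hL1 : (1:ℝ) ≤ L := by
    rw [hLdef, Real.le_log_iff_exp_le hn0]
    have := Real.exp_one_lt_d9
    linarith
  have hL0 : (0:ℝ) < L := lt_of_lt_of_le one_pos hL1
  have hLn : L ≤ (n:ℝ) := by
    have := Real.log_le_sub_one_of_pos hn0
    linarith
  set M := Real.log ((n:ℝ) / L) with hMdef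
  have hMsplit : M = L - Real.log L := by
    rw [hMdef, Real.log_div (ne_of_gt hn0) (ne_of_gt hL0)]
  have hlogL : 0 ≤ Real.log L := Real.log_nonneg hL1
  have hM0 : 0 ≤ M := by
    rw [hMsplit]
    linarith [Real.log_le_sub_one_of_pos hL0]
  have hML : M ≤ L := by rw [hMsplit]; linarith
  -- numeric bound : 2 L / n ≤ log 2
  have hs : (10:ℝ) ≤ Real.sqrt (n:ℝ) := by
    have h := Real.sqrt_le_sqrt hnR
    rwa [show (100:ℝ) = 10^2 by norm_num, Real.sqrt_sq (by norm_num)] at h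
  have hs0 : (0:ℝ) < Real.sqrt (n:ℝ) := by linarith
  have hsq : Real.sqrt (n:ℝ) * Real.sqrt (n:ℝ) = (n:ℝ) := Real.mul_self_sqrt hn0.le
  have hLsqrt : L ≤ 2 * Real.sqrt (n:ℝ) := by
    have h1 : Real.log (Real.sqrt (n:ℝ)) ≤ Real.sqrt (n:ℝ) - 1 :=
      Real.log_le_sub_one_of_pos hs0
    have h2 : Real.log (Real.sqrt (n:ℝ)) = L / 2 := by
      rw [hLdef, Real.log_sqrt hn0.le]
    linarith
  have hnum : 2 * L / (n:ℝ) ≤ Real.log 2 := by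
    have h1 : 2 * L / (n:ℝ) ≤ 4 / Real.sqrt (n:ℝ) := by
      rw [div_le_div_iff₀ hn0 hs0]
      nlinarith
    have h2 : (4:ℝ) / Real.sqrt (n:ℝ) ≤ 4 / 10 := by
      gcongr
    have := Real.log_two_gt_d9
    linarith
  set p := ((r:ℝ) - 1) / (r:ℝ) * M / (n:ℝ) with hpdef
  have hLn0 : (0:ℝ) < L / (n:ℝ) := by positivity
  -- total exponent identity
  have hident : ((n:ℝ)-2) * (-(p*(k:ℝ)) + ((k:ℝ)-1)*p*(r:ℝ)/((r:ℝ)-1)) + 2*p/((r:ℝ)-1)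
      + ((r:ℝ)-(k:ℝ))/(r:ℝ)*M = M*(2+2*((r:ℝ)-(k:ℝ)))/((r:ℝ)*(n:ℝ)) := by
    rw [hpdef]
    field_simp
    ring
  have hb : M*(2+2*((r:ℝ)-(k:ℝ)))/((r:ℝ)*(n:ℝ)) ≤ Real.log 2 := by
    have b1 : M*(2+2*((r:ℝ)-(k:ℝ))) ≤ M*(2*(r:ℝ)) := by nlinarith
    have b2 : M*(2+2*((r:ℝ)-(k:ℝ)))/((r:ℝ)*(n:ℝ)) ≤ M*(2*(r:ℝ))/((r:ℝ)*(n:ℝ)) :=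
      (div_le_div_iff_of_pos_right (by positivity : (0:ℝ) < (r:ℝ)*(n:ℝ))).mpr b1
    have b3 : M*(2*(r:ℝ))/((r:ℝ)*(n:ℝ)) = 2*M/(n:ℝ) := by field_simp
    have b4 : 2*M/(n:ℝ) ≤ 2*L/(n:ℝ) := by gcongr
    linarith
  have hrpow : (L/(n:ℝ)) ^ (((r:ℝ)-(k:ℝ))/(r:ℝ)) =
      Real.exp ((((r:ℝ)-(k:ℝ))/(r:ℝ)) * (-M)) := by
    rw [Real.rpow_def_of_pos hLn0]
    congr 1
    have hlog : Real.log (L/(n:ℝ)) = -M := by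
      rw [hMdef, Real.log_div (ne_of_gt hL0) (ne_of_gt hn0),
        Real.log_div (ne_of_gt hn0) (ne_of_gt hL0)]
      ring
    rw [hlog]; ring
  have hexp : Real.exp (((n:ℝ)-2) * (-(p*(k:ℝ)) + ((k:ℝ)-1)*p*(r:ℝ)/((r:ℝ)-1)) + 2*p/((r:ℝ)-1))
      ≤ 2 * (L/(n:ℝ)) ^ (((r:ℝ)-(k:ℝ))/(r:ℝ)) := by
    rw [hrpow]
    have e1 : Real.exp (((n:ℝ)-2) * (-(p*(k:ℝ)) + ((k:ℝ)-1)*p*(r:ℝ)/((r:ℝ)-1)) + 2*p/((r:ℝ)-1))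
        = Real.exp (M*(2+2*((r:ℝ)-(k:ℝ)))/((r:ℝ)*(n:ℝ))) *
          Real.exp ((((r:ℝ)-(k:ℝ))/(r:ℝ)) * (-M)) := by
      rw [← Real.exp_add, ← hident]; ring_nf
    rw [e1]
    have e2 : Real.exp (M*(2+2*((r:ℝ)-(k:ℝ)))/((r:ℝ)*(n:ℝ))) ≤ 2 := by
      calc Real.exp (M*(2+2*((r:ℝ)-(k:ℝ)))/((r:ℝ)*(n:ℝ))) ≤ Real.exp (Real.log 2) :=
            Real.exp_le_exp.mpr hb
        _ = 2 := Real.exp_log (by norm_num)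
    exact mul_le_mul_of_nonneg_right e2 (Real.exp_nonneg _)
  have hpow : (M/(n:ℝ))^(k-1) ≤ (L/(n:ℝ))^(k-1) := by
    apply pow_le_pow_left₀ (by positivity)
    gcongr
  have hmerge : (L/(n:ℝ))^(k-1) * (L/(n:ℝ)) ^ (((r:ℝ)-(k:ℝ))/(r:ℝ))
      = (L/(n:ℝ)) ^ ((k:ℝ)*((r:ℝ)-1)/(r:ℝ)) := by
    rw [← Real.rpow_natCast (L/(n:ℝ)) (k-1), ← Real.rpow_add hLn0]
    congr 1
    have hc : ((k-1:ℕ):ℝ) = (k:ℝ)-1 := by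
      have := Nat.cast_sub hk1 (R := ℝ); push_cast at this ⊢; linarith
    rw [hc]
    field_simp
    ring
  have key : (M/(n:ℝ))^(k-1) *
      Real.exp (((n:ℝ)-2) * (-(p*(k:ℝ)) + ((k:ℝ)-1)*p*(r:ℝ)/((r:ℝ)-1)) + 2*p/((r:ℝ)-1))
      ≤ 2 * (L/(n:ℝ)) ^ ((k:ℝ)*((r:ℝ)-1)/(r:ℝ)) := by
    calc (M/(n:ℝ))^(k-1) *
        Real.exp (((n:ℝ)-2) * (-(p*(k:ℝ)) + ((k:ℝ)-1)*p*(r:ℝ)/((r:ℝ)-1)) + 2*p/((r:ℝ)-1))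
        ≤ (L/(n:ℝ))^(k-1) * (2 * (L/(n:ℝ)) ^ (((r:ℝ)-(k:ℝ))/(r:ℝ))) := by
          apply mul_le_mul hpow hexp (Real.exp_nonneg _) (by positivity)
      _ = 2 * ((L/(n:ℝ))^(k-1) * (L/(n:ℝ)) ^ (((r:ℝ)-(k:ℝ))/(r:ℝ))) := by ring
      _ = 2 * (L/(n:ℝ)) ^ ((k:ℝ)*((r:ℝ)-1)/(r:ℝ)) := by rw [hmerge]
  -- rewrite LHS power-of-r part
  have hlhs : (p/((r:ℝ)-1))^(k-1) * (r:ℝ)^(-((k*(n-2):ℕ):ℤ)-2)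
      = (M/(n:ℝ))^(k-1) * (r:ℝ)^(-((k*(n-1):ℕ):ℤ)-1) := by
    have h1 : p/((r:ℝ)-1) = (M/(n:ℝ)) * ((r:ℝ))⁻¹ := by
      rw [hpdef]; field_simp
    rw [h1, mul_pow, inv_pow, ← zpow_natCast (r:ℝ) (k-1), ← zpow_neg, mul_assoc,
      ← zpow_add₀ (ne_of_gt hr0)]
    congr 1
    have e2 : ((k*(n-2):ℕ):ℤ) = (k:ℤ)*((n:ℤ)-2) := by
      rw [Nat.cast_mul, Nat.cast_sub hn2]; norm_num
    have e3 : ((k*(n-1):ℕ):ℤ) = (k:ℤ)*((n:ℤ)-1) := by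
      rw [Nat.cast_mul, Nat.cast_sub (by omega : 1 ≤ n)]; norm_num
    have e4 : ((k-1:ℕ):ℤ) = (k:ℤ)-1 := by omega
    rw [e2, e3, e4]
    ring
  calc (p/((r:ℝ)-1))^(k-1) * (r:ℝ)^(-((k*(n-2):ℕ):ℤ)-2) *
        Real.exp (((n:ℝ)-2) * (-(p*(k:ℝ)) + ((k:ℝ)-1)*p*(r:ℝ)/((r:ℝ)-1))) *
        Real.exp (2*p/((r:ℝ)-1))
      = ((M/(n:ℝ))^(k-1) *
          Real.exp (((n:ℝ)-2) * (-(p*(k:ℝ)) + ((k:ℝ)-1)*p*(r:ℝ)/((r:ℝ)-1)) + 2*p/((r:ℝ)-1))) *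
          (r:ℝ)^(-((k*(n-1):ℕ):ℤ)-1) := by
        rw [hlhs, Real.exp_add]
        ring
    _ ≤ 2 * (L/(n:ℝ)) ^ ((k:ℝ)*((r:ℝ)-1)/(r:ℝ)) * (r:ℝ)^(-((k*(n-1):ℕ):ℤ)-1) := by
        exact mul_le_mul_of_nonneg_right key (zpow_nonneg hr0.le _)
end

section
/- Let M, n, r be such that M ≤ 0.01 (n/ln n)^{(r-1)/r} r^{n-1} and r ≥ 2, n ≥ 2. Then the sum over k = 1 to r of 2 * C(M, k) * 2r * (ln n/n)^{k(r-1)/r} * r^{-(n-1)k - 1} is at most 0.04e, where C(M,k) = M^k/k! is used as an upper bound for the binomial coefficient. -/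
theorem union_bound_sum_le (M : ℝ) (n r : ℕ) (hM0 : 0 ≤ M) (hn : 2 ≤ n) (hr : 2 ≤ r)
    (hM : M ≤ 0.01 * ((n : ℝ) / Real.log n) ^ (((r : ℝ) - 1) / r) * (r : ℝ) ^ (n - 1)) :
    ∑ k ∈ Finset.Icc 1 r,
        2 * (M ^ k / (Nat.factorial k : ℝ)) * (2 * (r : ℝ)) *
          (Real.log n / (n : ℝ)) ^ ((k : ℝ) * ((r : ℝ) - 1) / r) *
          (r : ℝ) ^ (-(((n - 1) * k : ℕ) : ℤ) - 1) ≤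
      0.04 * Real.exp 1 := by
  have h1n : (1:ℝ) < n := by exact_mod_cast lt_of_lt_of_le one_lt_two hn
  have hL : 0 < Real.log n := Real.log_pos h1n
  have hNpos : (0:ℝ) < n := lt_trans one_pos h1n
  have hrpos : (0:ℝ) < r := by positivity
  have hr0 : (r:ℝ) ≠ 0 := ne_of_gt hrpos
  have hy : (0:ℝ) < (n:ℝ)/Real.log n := div_pos hNpos hL
  have key : ∀ k ∈ Finset.Icc 1 r,
      2 * (M ^ k / (Nat.factorial k : ℝ)) * (2 * (r : ℝ)) *
          (Real.log n / (n : ℝ)) ^ ((k : ℝ) * ((r : ℝ) - 1) / r) *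
          (r : ℝ) ^ (-(((n - 1) * k : ℕ) : ℤ) - 1) ≤ 4 * (0.01:ℝ) ^ k := by
    intro k _
    set y : ℝ := (n:ℝ)/Real.log n with hydef
    set E : ℝ := (((r:ℝ)-1)/r) * k with hEdef
    set a : ℕ := (n-1)*k with hadef
    have hyE : (0:ℝ) < y ^ E := Real.rpow_pos_of_pos hy E
    have hra : (0:ℝ) < (r:ℝ) ^ a := by positivity
    have hX : (Real.log n / (n:ℝ)) ^ ((k : ℝ) * ((r : ℝ) - 1) / r) = (y ^ E)⁻¹ := by
      have h1 : Real.log n / (n:ℝ) = y⁻¹ := by rw [hydef, inv_div]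
      have h2 : (k : ℝ) * ((r : ℝ) - 1) / r = E := by rw [hEdef]; ring
      rw [h1, h2, Real.inv_rpow hy.le]
    have hZ : (r : ℝ) ^ (-(((n - 1) * k : ℕ) : ℤ) - 1) = ((r:ℝ)^a)⁻¹ * (r:ℝ)⁻¹ := by
      rw [zpow_sub₀ hr0, zpow_neg, zpow_natCast, zpow_one, div_eq_mul_inv]
    have hMk : M ^ k ≤ 0.01 ^ k * y ^ E * (r:ℝ) ^ a := by
      calc M ^ k ≤ (0.01 * y ^ (((r:ℝ)-1)/r) * (r:ℝ)^(n-1)) ^ k :=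
            pow_le_pow_left₀ hM0 hM k
        _ = 0.01 ^ k * (y ^ (((r:ℝ)-1)/r)) ^ (k:ℕ) * ((r:ℝ)^(n-1)) ^ k := by
            rw [mul_pow, mul_pow]
        _ = 0.01 ^ k * y ^ E * (r:ℝ) ^ a := by
            rw [← Real.rpow_natCast (y ^ (((r:ℝ)-1)/r)) k, ← Real.rpow_mul hy.le,
              ← pow_mul, hEdef, hadef]
    have h2 : M ^ k * ((y ^ E)⁻¹ * ((r:ℝ)^a)⁻¹) ≤ 0.01 ^ k := by
      calc M ^ k * ((y ^ E)⁻¹ * ((r:ℝ)^a)⁻¹)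
          ≤ (0.01 ^ k * y ^ E * (r:ℝ) ^ a) * ((y ^ E)⁻¹ * ((r:ℝ)^a)⁻¹) :=
            mul_le_mul_of_nonneg_right hMk (by positivity)
        _ = 0.01 ^ k := by field_simp
    have hfac : (1:ℝ) ≤ (Nat.factorial k : ℝ) := by exact_mod_cast Nat.factorial_pos k
    rw [hX, hZ]
    calc 2 * (M ^ k / (Nat.factorial k : ℝ)) * (2 * (r : ℝ)) * (y ^ E)⁻¹ * (((r:ℝ)^a)⁻¹ * (r:ℝ)⁻¹)
        = (4 / (Nat.factorial k : ℝ)) * (M ^ k * ((y ^ E)⁻¹ * ((r:ℝ)^a)⁻¹)) * ((r:ℝ) * (r:ℝ)⁻¹) := by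
          ring
      _ = (4 / (Nat.factorial k : ℝ)) * (M ^ k * ((y ^ E)⁻¹ * ((r:ℝ)^a)⁻¹)) := by
          rw [mul_inv_cancel₀ hr0, mul_one]
      _ ≤ (4 / (Nat.factorial k : ℝ)) * (0.01 ^ k) :=
          mul_le_mul_of_nonneg_left h2 (by positivity)
      _ ≤ 4 * (0.01:ℝ) ^ k := by
          apply mul_le_mul_of_nonneg_right _ (by positivity)
          exact div_le_self (by norm_num) hfac
  calc ∑ k ∈ Finset.Icc 1 r,
        2 * (M ^ k / (Nat.factorial k : ℝ)) * (2 * (r : ℝ)) *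
          (Real.log n / (n : ℝ)) ^ ((k : ℝ) * ((r : ℝ) - 1) / r) *
          (r : ℝ) ^ (-(((n - 1) * k : ℕ) : ℤ) - 1)
      ≤ ∑ k ∈ Finset.Icc 1 r, 4 * (0.01:ℝ) ^ k := Finset.sum_le_sum key
    _ = 4 * ∑ k ∈ Finset.Icc 1 r, (0.01:ℝ) ^ k := by rw [Finset.mul_sum]
    _ ≤ 0.04 * Real.exp 1 := by
        have hgeom : ∑ k ∈ Finset.Icc 1 r, (0.01:ℝ) ^ k ≤ 1/99 := by
          have h1 : ∑ k ∈ Finset.Icc 1 r, (0.01:ℝ) ^ k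
              = ∑ i ∈ Finset.range r, (0.01:ℝ) ^ (1 + i) := by
            rw [show Finset.Icc 1 r = Finset.Ico 1 (r+1) from by rw [Finset.Ico_add_one_right_eq_Icc],
              Finset.sum_Ico_eq_sum_range]
            simp
          have h2 : ∑ i ∈ Finset.range r, (0.01:ℝ) ^ (1 + i)
              = 0.01 * ∑ i ∈ Finset.range r, (0.01:ℝ) ^ i := by
            rw [Finset.mul_sum]
            exact Finset.sum_congr rfl fun i _ => by rw [pow_add, pow_one]
          have h3 : ∑ i ∈ Finset.range r, (0.01:ℝ) ^ i = ((0.01:ℝ) ^ r - 1)/(0.01 - 1) :=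
            geom_sum_eq (by norm_num) r
          have h4 : (0:ℝ) ≤ (0.01:ℝ) ^ r := by positivity
          have h5 : ((0.01:ℝ) ^ r - 1)/(0.01 - 1) ≤ 100/99 := by
            rw [div_le_iff_of_neg (by norm_num)]
            nlinarith
          rw [h1, h2, h3]
          linarith
        have he : (2.7182818283:ℝ) < Real.exp 1 := Real.exp_one_gt_d9
        nlinarith
end

section
/- Let n ≥ 2, r ≥ 2 with r < (ln n)^{1/5}, p = ((r-1)/r) ln(n/ln n)/n, m ≥ n²(r-1)/(2 ln n), and q = mp/(r(r-1)) + 2 sqrt(13 m ln r / r) + ((r+1)/r)(n/ln n). Then for all sufficiently large n: r(r-1)(n-1) q / m ≤ p(n-1) + (1/r) ln(n/ln n). -/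
open Filter Real

private lemma q_evt : ∀ᶠ n : ℕ in atTop,
    1 ≤ n ∧ 256 ≤ Real.log n ∧ Real.log (Real.log n) ≤ Real.log n / 2 ∧
      Real.log (Real.log n) ≤ (1/1000) * (Real.log n) ^ ((1:ℝ)/5) := by
  have hl : Tendsto (fun n : ℕ => Real.log n) atTop atTop :=
    Real.tendsto_log_atTop.comp tendsto_natCast_atTop_atTop
  have hT : ∀ᶠ t : ℝ in atTop,
      256 ≤ t ∧ Real.log t ≤ t / 2 ∧ Real.log t ≤ (1/1000) * t ^ ((1:ℝ)/5) := by
    have c2 := Real.isLittleO_log_id_atTop.bound (by norm_num : (0:ℝ) < 1/2)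
    have c3 := (isLittleO_log_rpow_atTop (by norm_num : (0:ℝ) < 1/5)).bound
      (by norm_num : (0:ℝ) < 1/1000)
    filter_upwards [eventually_ge_atTop (256:ℝ), c2, c3] with t h1 h2 h3
    have ht1 : (1:ℝ) ≤ t := by linarith
    simp only [Real.norm_eq_abs, id_eq] at h2 h3
    rw [abs_of_nonneg (Real.log_nonneg ht1), abs_of_nonneg (by linarith : (0:ℝ) ≤ t)] at h2
    rw [abs_of_nonneg (Real.log_nonneg ht1),
      abs_of_nonneg (Real.rpow_nonneg (by linarith : (0:ℝ) ≤ t) _)] at h3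
    exact ⟨h1, by linarith, h3⟩
  filter_upwards [eventually_ge_atTop 1, hl.eventually hT] with n h1 h2
  exact ⟨h1, h2.1, h2.2.1, h2.2.2⟩

set_option maxHeartbeats 1000000 in
theorem q_exponent_bound :
    ∃ N : ℕ, ∀ n : ℕ, N ≤ n → ∀ m r : ℕ,
      2 ≤ r →
      (r : ℝ) < (Real.log n) ^ ((1 : ℝ) / 5) →
      (m : ℝ) ≥ (n : ℝ) ^ 2 * ((r : ℝ) - 1) / (2 * Real.log n) →
      (r : ℝ) * ((r : ℝ) - 1) * ((n : ℝ) - 1) *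
          ((m : ℝ) * ((((r : ℝ) - 1) / r) * Real.log ((n : ℝ) / Real.log n) / n) /
              ((r : ℝ) * ((r : ℝ) - 1)) +
            2 * Real.sqrt (13 * (m : ℝ) * Real.log r / r) +
            (((r : ℝ) + 1) / r) * ((n : ℝ) / Real.log n)) / (m : ℝ) ≤
        ((((r : ℝ) - 1) / r) * Real.log ((n : ℝ) / Real.log n) / n) * ((n : ℝ) - 1) +
          (1 / r) * Real.log ((n : ℝ) / Real.log n) := by
  obtain ⟨N, hN⟩ := eventually_atTop.mp q_evt
  refine ⟨N, fun n hn m r hr2 hrlt hm => ?_⟩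
  obtain ⟨hn1, ht256, hlogt2, hlogt5⟩ := hN n hn
  set t : ℝ := Real.log n with hts
  have htpos : (0:ℝ) < t := by linarith
  have hn0 : (0:ℝ) < n := by exact_mod_cast Nat.lt_of_lt_of_le Nat.zero_lt_one hn1
  have hr0 : (0:ℝ) < r := by exact_mod_cast Nat.lt_of_lt_of_le Nat.zero_lt_two hr2
  have hr2' : (2:ℝ) ≤ r := by exact_mod_cast hr2
  set u : ℝ := t ^ ((1:ℝ)/5) with hus
  have hu0 : (0:ℝ) < u := Real.rpow_pos_of_pos htpos _
  have hu5 : u ^ 5 = t := by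
    rw [hus, ← Real.rpow_natCast (t ^ ((1:ℝ)/5)) 5, ← Real.rpow_mul htpos.le]
    norm_num
  have hu3 : (3:ℝ) ≤ u := by
    by_contra h
    push_neg at h
    have : u ^ 5 < 3 ^ 5 := pow_lt_pow_left₀ h hu0.le (by norm_num)
    rw [hu5] at this
    norm_num at this
    linarith
  have hru : (r:ℝ) < u := hrlt
  have hmlow : (n:ℝ)^2 * ((r:ℝ)-1) ≤ 2 * t * m := by
    rw [ge_iff_le, div_le_iff₀ (by linarith : (0:ℝ) < 2 * t)] at hm
    linarith [hm]
  have hm0 : (0:ℝ) < m := by nlinarith [sq_nonneg ((n:ℝ))]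
  have hlogr0 : (0:ℝ) ≤ Real.log r := Real.log_nonneg (by linarith)
  have hlogr : Real.log r ≤ u / 5000 := by
    have h1 : Real.log r ≤ Real.log (t ^ ((1:ℝ)/5)) := Real.log_le_log hr0 hrlt.le
    rw [Real.log_rpow htpos] at h1
    have : Real.log t ≤ u / 5 / 200 := by rw [hus]; linarith [hlogt5]
    linarith
  set L : ℝ := Real.log ((n:ℝ) / t) with hLs
  have hLeq : L = t - Real.log t := Real.log_div (ne_of_gt hn0) (ne_of_gt htpos)
  have hLlow : u ^ 5 / 2 ≤ L := by rw [hLeq, hu5]; linarith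
  set S : ℝ := Real.sqrt (13 * (m:ℝ) * Real.log r / r) with hSs
  -- bound on S
  have hS : S ≤ u ^ 3 * m / (8 * r * n) := by
    rw [hSs, Real.sqrt_le_iff]
    constructor
    · positivity
    · rw [div_pow, div_le_div_iff₀ hr0 (by positivity)]
      have hprod : Real.log r * ((r:ℝ) * (n:ℝ)^2) ≤ (u/5000) * (4 * u^5 * m) := by
        have h1 : (r:ℝ) * (n:ℝ)^2 ≤ 4 * u^5 * m := by nlinarith [hmlow, hu5]
        have h2 : (0:ℝ) ≤ (r:ℝ) * (n:ℝ)^2 := by positivity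
        exact mul_le_mul hlogr h1 h2 (by positivity)
      have hkey := mul_le_mul_of_nonneg_left hprod (by positivity : (0:ℝ) ≤ 832 * (m:ℝ) * r)
      have hnn : (0:ℝ) ≤ u ^ 6 * m ^ 2 * r := by positivity
      linarith [hkey, hnn]
  have hrne : (r:ℝ) ≠ 0 := ne_of_gt hr0
  have hr1ne : (r:ℝ) - 1 ≠ 0 := by intro h; linarith
  have hnne : (n:ℝ) ≠ 0 := ne_of_gt hn0
  have htne : t ≠ 0 := ne_of_gt htpos
  have hmne : (m:ℝ) ≠ 0 := ne_of_gt hm0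
  have expand : (r:ℝ) * ((r:ℝ) - 1) * ((n:ℝ) - 1) *
          ((m:ℝ) * ((((r:ℝ) - 1) / r) * L / n) / ((r:ℝ) * ((r:ℝ) - 1)) +
            2 * S + (((r:ℝ) + 1) / r) * ((n:ℝ) / t)) / m
      = ((((r:ℝ) - 1) / r) * L / n) * ((n:ℝ) - 1) +
        ((r:ℝ) * ((r:ℝ) - 1) * ((n:ℝ) - 1) * (2 * S) / m +
         (r:ℝ) * ((r:ℝ) - 1) * ((n:ℝ) - 1) * ((((r:ℝ) + 1) / r) * ((n:ℝ) / t)) / m) := by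
    field_simp
    ring
  rw [expand]
  have hn1' : (1:ℝ) ≤ n := by exact_mod_cast hn1
  apply add_le_add_right
  -- A term bound
  have hA : (r:ℝ) * ((r:ℝ) - 1) * ((n:ℝ) - 1) * (2 * S) / m ≤ u ^ 4 / 4 := by
    have hpre : (0:ℝ) ≤ (r:ℝ) * ((r:ℝ) - 1) * ((n:ℝ) - 1) * 2 :=
      mul_nonneg (mul_nonneg (mul_nonneg (by linarith) (by linarith)) (by linarith))
        (by norm_num)
    have step1 : (r:ℝ) * ((r:ℝ) - 1) * ((n:ℝ) - 1) * (2 * S) / m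
        ≤ (r:ℝ) * ((r:ℝ) - 1) * ((n:ℝ) - 1) * (2 * (u ^ 3 * m / (8 * r * n))) / m := by
      apply (div_le_div_iff_of_pos_right hm0).mpr
      linarith [mul_le_mul_of_nonneg_left hS hpre]
    have step2 : (r:ℝ) * ((r:ℝ) - 1) * ((n:ℝ) - 1) * (2 * (u ^ 3 * m / (8 * r * n))) / m
        = ((r:ℝ) - 1) * (((n:ℝ) - 1) / n) * u ^ 3 / 4 := by
      field_simp
      ring
    have step3 : ((r:ℝ) - 1) * (((n:ℝ) - 1) / n) * u ^ 3 / 4 ≤ u ^ 4 / 4 := by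
      have hfrac : ((n:ℝ) - 1) / n ≤ 1 := by
        rw [div_le_one hn0]; linarith
      have h1 : ((r:ℝ) - 1) * (((n:ℝ) - 1) / n) ≤ u := by
        have h2 : (0:ℝ) ≤ ((n:ℝ) - 1) / n := div_nonneg (by linarith) hn0.le
        nlinarith
      nlinarith [pow_pos hu0 3]
    linarith [step1, step2 ▸ step3]
  -- B term bound
  have hB : (r:ℝ) * ((r:ℝ) - 1) * ((n:ℝ) - 1) * ((((r:ℝ) + 1) / r) * ((n:ℝ) / t)) / m
      ≤ u ^ 4 / 4 := by
    have e1 : (r:ℝ) * ((r:ℝ) - 1) * ((n:ℝ) - 1) * ((((r:ℝ) + 1) / r) * ((n:ℝ) / t)) / m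
        = (((r:ℝ) - 1) * ((r:ℝ) + 1) * (((n:ℝ) - 1) * n) / t) / m := by
      field_simp
    have e2 : (((r:ℝ) - 1) * ((r:ℝ) + 1) * (((n:ℝ) - 1) * n) / t) / m ≤ 2 * ((r:ℝ) + 1) := by
      rw [div_le_iff₀ hm0, div_le_iff₀ htpos]
      have h1 : ((r:ℝ) + 1) * ((n:ℝ)^2 * ((r:ℝ) - 1)) ≤ ((r:ℝ) + 1) * (2 * t * m) :=
        mul_le_mul_of_nonneg_left hmlow (by linarith)
      have h2 : (0:ℝ) ≤ ((r:ℝ) + 1) * (((r:ℝ) - 1) * n) :=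
        mul_nonneg (by linarith) (mul_nonneg (by linarith) hn0.le)
      nlinarith [h1, h2]
    have e3 : 2 * ((r:ℝ) + 1) ≤ u ^ 4 / 4 := by
      have key : (0:ℝ) ≤ u * ((u - 3) * (u^2 + 3*u + 9)) :=
        mul_nonneg hu0.le (mul_nonneg (by linarith) (by positivity))
      nlinarith [key, hru, hu3]
    linarith [e1 ▸ e2]
  -- RHS lower bound
  have hR : u ^ 4 / 2 ≤ (1 / r) * L := by
    have h1 : u ^ 4 / 2 = (1 / u) * (u ^ 5 / 2) := by field_simp
    have h2 : (1 / u) * (u ^ 5 / 2) ≤ (1 / r) * (u ^ 5 / 2) :=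
      mul_le_mul_of_nonneg_right (one_div_le_one_div_of_le hr0 hru.le) (by positivity)
    have h3 : (1 / r) * (u ^ 5 / 2) ≤ (1 / r) * L :=
      mul_le_mul_of_nonneg_left hLlow (by positivity)
    linarith
  linarith
end

section
/- Let n ≥ 2, r ≥ 2, p = ((r-1)/r) ln(n/ln n)/n, and let M ≤ 0.01 (n/ln n)^{(r-1)/r} r^{n-1}. Then M * r^{-n} * (n/ln n)^{1/r} + Σ_{k=2}^{r} 2 M * C(M, k-1) * r^{-k(n-1)-1} * e^{3p} * (n/ln n)^{k/r - k + 1} ≤ 0.02 * n/(r ln n), for all sufficiently large n. -/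
set_option maxHeartbeats 1000000

theorem dangerous_edges_expectation :
    ∃ N : ℕ, ∀ n : ℕ, N ≤ n → ∀ r : ℕ, 2 ≤ r → ∀ M : ℝ, 0 ≤ M →
      M ≤ 0.01 * ((n : ℝ) / Real.log n) ^ (((r : ℝ) - 1) / r) * (r : ℝ) ^ (n - 1) →
      M * (r : ℝ) ^ (-(n : ℤ)) * ((n : ℝ) / Real.log n) ^ ((1 : ℝ) / r) +
          ∑ k ∈ Finset.Icc 2 r,
            2 * M * (M ^ (k - 1) / (Nat.factorial (k - 1) : ℝ)) *
              (r : ℝ) ^ (-((k * (n - 1) : ℕ) : ℤ) - 1) *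
              Real.exp (3 * ((((r : ℝ) - 1) / r) * Real.log ((n : ℝ) / Real.log n) / n)) *
              ((n : ℝ) / Real.log n) ^ ((k : ℝ) / r - (k : ℝ) + 1) ≤
        0.02 * (n : ℝ) / ((r : ℝ) * Real.log n) := by
  refine ⟨100, ?_⟩
  intro n hn r hr M hM hMle
  have hn100 : (100:ℝ) ≤ (n:ℝ) := by exact_mod_cast hn
  have hn0 : (0:ℝ) < n := by linarith
  have hr2 : (2:ℝ) ≤ (r:ℝ) := by exact_mod_cast hr
  have hr0 : (0:ℝ) < r := by linarith
  have hrne : (r:ℝ) ≠ 0 := ne_of_gt hr0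
  have hlog1 : 1 ≤ Real.log n := by
    rw [Real.le_log_iff_exp_le hn0]
    have := Real.exp_one_lt_d9
    linarith
  have hlogpos : 0 < Real.log n := by linarith
  set L : ℝ := (n:ℝ) / Real.log n with hLdef
  have hLpos : 0 < L := div_pos hn0 hlogpos
  have hLn : L ≤ n := div_le_self (le_of_lt hn0) hlog1
  have hL1 : 1 ≤ L := by
    rw [hLdef, le_div_iff₀ hlogpos]
    have hs : Real.sqrt n ^ 2 = n := Real.sq_sqrt (le_of_lt hn0)
    have hs0 : 0 ≤ Real.sqrt n := Real.sqrt_nonneg n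
    have h1 : Real.log (Real.sqrt n) ≤ Real.sqrt n - 1 :=
      Real.log_le_sub_one_of_pos (Real.sqrt_pos.mpr hn0)
    have h2 : Real.log n = 2 * Real.log (Real.sqrt n) := by
      rw [Real.log_sqrt (le_of_lt hn0)]; ring
    nlinarith [sq_nonneg (Real.sqrt n - 10)]
  have hlogL0 : 0 ≤ Real.log L := Real.log_nonneg hL1
  have hlogLn : Real.log L ≤ Real.log n := Real.log_le_log hLpos hLn
  have hlogn3 : Real.log n ≤ (n:ℝ) / 3 := by
    have hs : Real.sqrt n ^ 2 = n := Real.sq_sqrt (le_of_lt hn0)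
    have hs0 : 0 ≤ Real.sqrt n := Real.sqrt_nonneg n
    have h1 : Real.log (Real.sqrt n) ≤ Real.sqrt n - 1 :=
      Real.log_le_sub_one_of_pos (Real.sqrt_pos.mpr hn0)
    have h2 : Real.log n = 2 * Real.log (Real.sqrt n) := by
      rw [Real.log_sqrt (le_of_lt hn0)]; ring
    nlinarith [sq_nonneg (Real.sqrt n - 10)]
  -- exponential bound
  have hc0 : 0 ≤ ((r:ℝ)-1)/r := div_nonneg (by linarith) hr0.le
  have hc1 : ((r:ℝ)-1)/r ≤ 1 := by rw [div_le_one hr0]; linarith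
  have hp1 : 3 * ((((r:ℝ)-1)/r) * Real.log L / n) ≤ 1 := by
    have hX : ((r:ℝ)-1)/r * Real.log L ≤ (n:ℝ)/3 := by
      have := mul_le_of_le_one_left hlogL0 hc1
      linarith
    rw [← mul_div_assoc, div_le_one hn0]
    linarith
  have hexp : Real.exp (3 * ((((r:ℝ)-1)/r) * Real.log L / n)) ≤ 2.72 := by
    calc Real.exp (3 * ((((r:ℝ)-1)/r) * Real.log L / n)) ≤ Real.exp 1 :=
          Real.exp_le_exp.mpr hp1
      _ ≤ 2.72 := by have := Real.exp_one_lt_d9; linarith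
  -- power combination lemmas
  have hrz : ∀ m : ℕ, (r:ℝ)^(m:ℕ) * (r:ℝ)^(-(m:ℤ)-1) = 1/r := by
    intro m
    rw [← zpow_natCast (r:ℝ) m, ← zpow_add₀ hrne]
    rw [show (m:ℤ) + (-(m:ℤ)-1) = -1 by ring, zpow_neg_one, one_div]
  have hpow : L^(((r:ℝ)-1)/r) * L^((1:ℝ)/r) = L := by
    rw [← Real.rpow_add hLpos, show ((r:ℝ)-1)/r + 1/r = 1 by field_simp; ring]
    exact Real.rpow_one L
  have hzp : (r:ℝ)^(n-1:ℕ) * (r:ℝ)^(-(n:ℤ)) = 1/r := by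
    rw [← zpow_natCast (r:ℝ) (n-1), ← zpow_add₀ hrne]
    rw [show ((n-1:ℕ):ℤ) + (-(n:ℤ)) = -1 by omega, zpow_neg_one, one_div]
  -- first term
  have hfirst : M * (r:ℝ)^(-(n:ℤ)) * L^((1:ℝ)/r) ≤ 0.01 * L / r := by
    have hA : (0:ℝ) ≤ (r:ℝ)^(-(n:ℤ)) := by positivity
    have hB : (0:ℝ) ≤ L^((1:ℝ)/r) := by positivity
    calc M * (r:ℝ)^(-(n:ℤ)) * L^((1:ℝ)/r)
        ≤ (0.01 * L^(((r:ℝ)-1)/r) * (r:ℝ)^(n-1)) * (r:ℝ)^(-(n:ℤ)) * L^((1:ℝ)/r) := by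
          gcongr
      _ = 0.01 * (L^(((r:ℝ)-1)/r) * L^((1:ℝ)/r)) * ((r:ℝ)^(n-1:ℕ) * (r:ℝ)^(-(n:ℤ))) := by
          ring
      _ = 0.01 * L * (1/r) := by rw [hpow, hzp]
      _ = 0.01 * L / r := by ring
  -- sum term
  have hterm : ∀ k ∈ Finset.Icc 2 r,
      2 * M * (M^(k-1)/(Nat.factorial (k-1):ℝ)) * (r:ℝ)^(-((k*(n-1):ℕ):ℤ)-1) *
        Real.exp (3 * ((((r:ℝ)-1)/r) * Real.log L / n)) * L^((k:ℝ)/r - (k:ℝ) + 1)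
        ≤ 5.44 * 0.01^k * (L / r) := by
    intro k hk
    obtain ⟨hk2, hkr⟩ := Finset.mem_Icc.mp hk
    have hApos : (0:ℝ) ≤ (r:ℝ)^(-((k*(n-1):ℕ):ℤ)-1) := by positivity
    have hEpos : (0:ℝ) ≤ Real.exp (3 * ((((r:ℝ)-1)/r) * Real.log L / n)) :=
      (Real.exp_pos _).le
    have hBpos : (0:ℝ) ≤ L^((k:ℝ)/r - (k:ℝ) + 1) := Real.rpow_nonneg hLpos.le _
    have hdiv : M^(k-1)/(Nat.factorial (k-1):ℝ) ≤ M^(k-1) :=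
      div_le_self (pow_nonneg hM _) (Nat.one_le_cast.mpr (Nat.factorial_pos _))
    have hMk : M * M^(k-1) = M^k := by
      rw [← pow_succ']
      congr 1
      omega
    have hXk : (L^(((r:ℝ)-1)/r))^k * L^((k:ℝ)/r - (k:ℝ) + 1) = L := by
      rw [← Real.rpow_natCast (L^(((r:ℝ)-1)/r)) k, ← Real.rpow_mul hLpos.le,
        ← Real.rpow_add hLpos,
        show ((r:ℝ)-1)/r * (k:ℝ) + ((k:ℝ)/r - (k:ℝ) + 1) = 1 by field_simp; ring]
      exact Real.rpow_one L
    have hYk : ((r:ℝ)^(n-1:ℕ))^k * (r:ℝ)^(-((k*(n-1):ℕ):ℤ)-1) = 1/r := by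
      rw [← pow_mul, show (n-1)*k = k*(n-1) from Nat.mul_comm _ _]
      exact hrz (k*(n-1))
    calc 2 * M * (M^(k-1)/(Nat.factorial (k-1):ℝ)) * (r:ℝ)^(-((k*(n-1):ℕ):ℤ)-1) *
        Real.exp (3 * ((((r:ℝ)-1)/r) * Real.log L / n)) * L^((k:ℝ)/r - (k:ℝ) + 1)
        ≤ 2 * M * M^(k-1) * (r:ℝ)^(-((k*(n-1):ℕ):ℤ)-1) *
          Real.exp (3 * ((((r:ℝ)-1)/r) * Real.log L / n)) * L^((k:ℝ)/r - (k:ℝ) + 1) := by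
          gcongr
      _ = 2 * M^k * (r:ℝ)^(-((k*(n-1):ℕ):ℤ)-1) *
          Real.exp (3 * ((((r:ℝ)-1)/r) * Real.log L / n)) * L^((k:ℝ)/r - (k:ℝ) + 1) := by
          rw [show 2 * M * M^(k-1) = 2 * (M * M^(k-1)) by ring, hMk]
      _ ≤ 2 * (0.01 * L^(((r:ℝ)-1)/r) * (r:ℝ)^(n-1))^k * (r:ℝ)^(-((k*(n-1):ℕ):ℤ)-1) *
          Real.exp (3 * ((((r:ℝ)-1)/r) * Real.log L / n)) * L^((k:ℝ)/r - (k:ℝ) + 1) := by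
          gcongr
      _ = 2 * 0.01^k * ((L^(((r:ℝ)-1)/r))^k * L^((k:ℝ)/r - (k:ℝ) + 1)) *
          (((r:ℝ)^(n-1:ℕ))^k * (r:ℝ)^(-((k*(n-1):ℕ):ℤ)-1)) *
          Real.exp (3 * ((((r:ℝ)-1)/r) * Real.log L / n)) := by
          rw [mul_pow, mul_pow]; ring
      _ = 2 * 0.01^k * L * (1/r) *
          Real.exp (3 * ((((r:ℝ)-1)/r) * Real.log L / n)) := by rw [hXk, hYk]
      _ ≤ 2 * 0.01^k * L * (1/r) * 2.72 := by
          gcongr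
      _ = 5.44 * 0.01^k * (L / r) := by ring
  have hgeom : ∑ k ∈ Finset.Icc 2 r, (0.01:ℝ)^k ≤ 0.000102 := by
    rw [← Finset.Ico_add_one_right_eq_Icc]
    rw [geom_sum_Ico (by norm_num : (0.01:ℝ) ≠ 1) (by omega)]
    have h0 : (0:ℝ) ≤ (0.01:ℝ)^(r+1) := by positivity
    rw [div_le_iff_of_neg (by norm_num : (0.01:ℝ) - 1 < 0)]
    nlinarith [h0]
  have hsum : ∑ k ∈ Finset.Icc 2 r,
      2 * M * (M^(k-1)/(Nat.factorial (k-1):ℝ)) * (r:ℝ)^(-((k*(n-1):ℕ):ℤ)-1) *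
        Real.exp (3 * ((((r:ℝ)-1)/r) * Real.log L / n)) * L^((k:ℝ)/r - (k:ℝ) + 1)
        ≤ 0.01 * L / r := by
    have hLr : (0:ℝ) ≤ L / r := div_nonneg hLpos.le hr0.le
    calc ∑ k ∈ Finset.Icc 2 r,
        2 * M * (M^(k-1)/(Nat.factorial (k-1):ℝ)) * (r:ℝ)^(-((k*(n-1):ℕ):ℤ)-1) *
          Real.exp (3 * ((((r:ℝ)-1)/r) * Real.log L / n)) * L^((k:ℝ)/r - (k:ℝ) + 1)
        ≤ ∑ k ∈ Finset.Icc 2 r, 5.44 * 0.01^k * (L / r) := Finset.sum_le_sum hterm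
      _ = 5.44 * (L/r) * ∑ k ∈ Finset.Icc 2 r, (0.01:ℝ)^k := by
          rw [Finset.mul_sum]
          exact Finset.sum_congr rfl fun k _ => by ring
      _ ≤ 5.44 * (L/r) * 0.000102 := by gcongr
      _ ≤ 0.01 * L / r := by
          rw [show (0.01:ℝ) * L / r = 0.01 * (L/r) by ring]
          nlinarith
  have hfin : 0.02 * (n:ℝ) / ((r:ℝ) * Real.log n) = 0.02 * L / r := by
    rw [hLdef, ← mul_div_assoc, div_div, mul_comm (Real.log (n:ℝ)) (r:ℝ)]
  rw [hfin]
  exact le_trans (add_le_add hfirst hsum) (le_of_eq (by ring))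
end

section
/- For reals p ∈ (0, 1/2], r ≥ 2 integer, y_1, ..., y_{k-1} ∈ [0, p/(r-1)], and n ≥ 3, k ≥ 2 integers, the product ((1-p)/r + y_1)^{n-1} · ∏_{j=2}^{k-1} ((1-p)/r + y_j + p/(r-1) - y_{j-1})^{n-2} · ((1-p)/r + p/(r-1) - y_{k-1})^{n-1} is at most r^{-k(n-2)-2} * exp((n-2)(-pk + (k-1)pr/(r-1)) + 2p/(r-1)). -/
private lemma chain_exp_aux (p rr q T E c1 ck yk y1 n k : ℝ)
    (hqp : q * (rr - 1) = p)
    (hT' : T = (n-2) * (-(p * k) + (k - 1) * (rr * q)) + 2*q)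
    (hE : E = (n - 1) * c1 + (n - 2) * ((k - 2) * (-p + rr * q) + rr * (yk - y1)) + (n - 1) * ck)
    (hc1 : c1 = -p + rr * y1) (hck : ck = -p + rr * (q - yk))
    (hy1 : y1 ≤ q) (hyk : 0 ≤ yk) (hrr : 0 < rr) : E ≤ T := by
  have h1 : T = E + ((2*p - rr*q + 2*q) + rr*(yk - y1)) := by
    rw [hT', hE, hc1, hck]; ring
  have h2 : 2*p - rr*q + 2*q = rr*q := by linear_combination (-2) * hqp
  have h5 : rr*(yk - y1) = rr*yk - rr*y1 := by ring
  have h3 : rr * y1 ≤ rr * q := mul_le_mul_of_nonneg_left hy1 hrr.le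
  have h4 : 0 ≤ rr * yk := mul_nonneg hrr.le hyk
  linarith

theorem conditional_chain_prob_pointwise (p : ℝ) (r n k : ℕ)
    (hp0 : 0 < p) (hp1 : p ≤ 1 / 2) (hr : 2 ≤ r) (hn : 3 ≤ n) (hk : 2 ≤ k)
    (y : ℕ → ℝ)
    (hy : ∀ j ∈ Finset.Icc 1 (k - 1), 0 ≤ y j ∧ y j ≤ p / ((r : ℝ) - 1)) :
    ((1 - p) / r + y 1) ^ (n - 1) *
        (∏ j ∈ Finset.Icc 2 (k - 1),
          ((1 - p) / r + y j + p / ((r : ℝ) - 1) - y (j - 1)) ^ (n - 2)) *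
        ((1 - p) / r + p / ((r : ℝ) - 1) - y (k - 1)) ^ (n - 1) ≤
      (r : ℝ) ^ (-((k * (n - 2) : ℕ) : ℤ) - 2) *
        Real.exp (((n : ℝ) - 2) * (-(p * k) + ((k : ℝ) - 1) * p * r / ((r : ℝ) - 1)) +
          2 * p / ((r : ℝ) - 1)) := by
  have hr2 : (2:ℝ) ≤ (r:ℝ) := by exact_mod_cast hr
  have hrpos : (0:ℝ) < (r:ℝ) := by linarith
  have hr1 : (0:ℝ) < (r:ℝ) - 1 := by linarith
  set q := p / ((r : ℝ) - 1) with hqdef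
  have hq0 : 0 ≤ q := le_of_lt (div_pos hp0 hr1)
  have hqp : q * ((r:ℝ) - 1) = p := div_mul_cancel₀ p (ne_of_gt hr1)
  -- pointwise bounds
  have hb : ∀ t : ℝ, 0 ≤ t → 0 ≤ (1 - p) / r + t := by
    intro t ht
    have : 0 ≤ (1 - p) / r := div_nonneg (by linarith) hrpos.le
    linarith
  have key : ∀ t : ℝ, 0 ≤ t → (1 - p) / r + t ≤ Real.exp (-p + r * t) / r := by
    intro t ht
    have h1 : (1 - p) / r + t = (1 + (-p + (r:ℝ) * t)) / r := by
      field_simp; ring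
    rw [h1]
    gcongr
    linarith [Real.add_one_le_exp (-p + (r:ℝ) * t)]
  have hy1 : 0 ≤ y 1 ∧ y 1 ≤ q := hy 1 (by simp [Finset.mem_Icc]; omega)
  have hyk : 0 ≤ y (k-1) ∧ y (k-1) ≤ q := hy (k-1) (by simp [Finset.mem_Icc]; omega)
  -- the three nonneg t's
  have ht1 : (0:ℝ) ≤ y 1 := hy1.1
  have htk : (0:ℝ) ≤ q - y (k-1) := by linarith [hyk.2]
  have htmid : ∀ j ∈ Finset.Icc 2 (k-1), (0:ℝ) ≤ y j + q - y (j-1) := by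
    intro j hj
    simp only [Finset.mem_Icc] at hj
    have h1 := hy j (by simp [Finset.mem_Icc]; omega)
    have h2 := hy (j-1) (by simp [Finset.mem_Icc]; omega)
    linarith [h1.1, h2.2]
  -- step 1 : bound by exps
  set c1 := -p + (r:ℝ) * y 1 with hc1
  set ck := -p + (r:ℝ) * (q - y (k-1)) with hck
  set c : ℕ → ℝ := fun j => -p + (r:ℝ) * (y j + q - y (j-1)) with hc
  have step1 : ((1 - p) / r + y 1) ^ (n - 1) *
        (∏ j ∈ Finset.Icc 2 (k - 1),
          ((1 - p) / r + y j + q - y (j - 1)) ^ (n - 2)) *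
        ((1 - p) / r + q - y (k - 1)) ^ (n - 1) ≤
      (Real.exp c1 / r) ^ (n-1) *
        (∏ j ∈ Finset.Icc 2 (k - 1), (Real.exp (c j) / r) ^ (n - 2)) *
        (Real.exp ck / r) ^ (n-1) := by
    have e1 : ((1 - p) / r + y 1) ^ (n - 1) ≤ (Real.exp c1 / r) ^ (n-1) :=
      pow_le_pow_left₀ (hb _ ht1) (key _ ht1) _
    have ek : ((1 - p) / r + q - y (k - 1)) ^ (n - 1) ≤ (Real.exp ck / r) ^ (n-1) := by
      have h : (1 - p) / r + q - y (k - 1) = (1 - p) / r + (q - y (k-1)) := by ring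
      rw [h]
      exact pow_le_pow_left₀ (hb _ htk) (key _ htk) _
    have em : (∏ j ∈ Finset.Icc 2 (k - 1),
          ((1 - p) / r + y j + q - y (j - 1)) ^ (n - 2)) ≤
        ∏ j ∈ Finset.Icc 2 (k - 1), (Real.exp (c j) / r) ^ (n - 2) := by
      apply Finset.prod_le_prod
      · intro j hj
        have h : (1 - p) / r + y j + q - y (j - 1) = (1 - p) / r + (y j + q - y (j-1)) := by ring
        rw [h]
        exact pow_nonneg (hb _ (htmid j hj)) _
      · intro j hj
        have h : (1 - p) / r + y j + q - y (j - 1) = (1 - p) / r + (y j + q - y (j-1)) := by ring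
        rw [h]
        exact pow_le_pow_left₀ (hb _ (htmid j hj)) (key _ (htmid j hj)) _
    have nn1 : 0 ≤ ((1 - p) / r + y 1) ^ (n - 1) := pow_nonneg (hb _ ht1) _
    have nnm : 0 ≤ ∏ j ∈ Finset.Icc 2 (k - 1),
        ((1 - p) / r + y j + q - y (j - 1)) ^ (n - 2) := by
      apply Finset.prod_nonneg
      intro j hj
      have h : (1 - p) / r + y j + q - y (j - 1) = (1 - p) / r + (y j + q - y (j-1)) := by ring
      rw [h]
      exact pow_nonneg (hb _ (htmid j hj)) _
    have nnk : 0 ≤ (Real.exp ck / r) ^ (n-1) := pow_nonneg (by positivity) _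
    have nne1 : 0 ≤ (Real.exp c1 / r) ^ (n-1) := pow_nonneg (by positivity) _
    have nnem : 0 ≤ ∏ j ∈ Finset.Icc 2 (k - 1), (Real.exp (c j) / r) ^ (n - 2) :=
      Finset.prod_nonneg fun j _ => pow_nonneg (by positivity) _
    have hkk : ((1 - p) / r + q - y (k - 1)) ^ (n - 1) ≥ 0 := by
      have h : (1 - p) / r + q - y (k - 1) = (1 - p) / r + (q - y (k-1)) := by ring
      rw [h]; exact pow_nonneg (hb _ htk) _
    exact mul_le_mul (mul_le_mul e1 em nnm nne1) ek hkk (mul_nonneg nne1 nnem)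
  -- telescoping sum
  have htel0 : ∀ m : ℕ, ∑ j ∈ Finset.Icc 2 (m+1), (y j - y (j-1)) = y (m+1) - y 1 := by
    intro m
    induction m with
    | zero => rw [Finset.Icc_eq_empty (by omega)]; simp
    | succ m ih =>
        rw [Finset.sum_Icc_succ_top (by omega), ih]
        have h2 : m + 1 + 1 - 1 = m + 1 := by omega
        rw [h2]
        ring
  have htel : ∑ j ∈ Finset.Icc 2 (k-1), (y j - y (j-1)) = y (k-1) - y 1 := by
    have h : k - 1 = (k-2) + 1 := by omega
    rw [h]
    exact htel0 (k-2)
  -- sum of middle exponents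
  have hsum : ∑ j ∈ Finset.Icc 2 (k-1), c j
      = ((k:ℝ) - 2) * (-p + r * q) + r * (y (k-1) - y 1) := by
    have hcc : ∀ j, c j = (-p + (r:ℝ) * q) + (r:ℝ) * (y j - y (j-1)) := by
      intro j; simp only [hc]; ring
    rw [Finset.sum_congr rfl fun j _ => hcc j, Finset.sum_add_distrib,
      Finset.sum_const, ← Finset.mul_sum, htel]
    have hcard : (Finset.Icc 2 (k-1)).card = k - 2 := by
      rw [Nat.card_Icc]; omega
    rw [hcard]
    have : ((k - 2 : ℕ) : ℝ) = (k:ℝ) - 2 := by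
      have : (2:ℕ) ≤ k := hk
      push_cast [Nat.cast_sub this]
      ring
    rw [nsmul_eq_mul, this]
  -- rewrite RHS of step1 as exp(E)/r^A
  set A : ℕ := (n-1) + (n-2)*(k-2) + (n-1) with hA
  set E : ℝ := ((n:ℝ)-1) * c1 + ((n:ℝ)-2) * (((k:ℝ) - 2) * (-p + r * q) + r * (y (k-1) - y 1))
      + ((n:ℝ)-1) * ck with hE
  have hcast1 : ((n - 1 : ℕ) : ℝ) = (n:ℝ) - 1 := by
    push_cast [Nat.cast_sub (by omega : 1 ≤ n)]; ring
  have hcast2 : ((n - 2 : ℕ) : ℝ) = (n:ℝ) - 2 := by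
    push_cast [Nat.cast_sub (by omega : 2 ≤ n)]; ring
  have hcastk : ((k - 2 : ℕ) : ℝ) = (k:ℝ) - 2 := by
    push_cast [Nat.cast_sub (by omega : 2 ≤ k)]; ring
  have step2 : (Real.exp c1 / r) ^ (n-1) *
        (∏ j ∈ Finset.Icc 2 (k - 1), (Real.exp (c j) / r) ^ (n - 2)) *
        (Real.exp ck / r) ^ (n-1) = Real.exp E / (r:ℝ) ^ A := by
    have h1 : (Real.exp c1 / r) ^ (n-1) = Real.exp (((n:ℝ)-1) * c1) / (r:ℝ)^(n-1) := by
      rw [div_pow, ← Real.exp_nat_mul, hcast1]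
    have hk' : (Real.exp ck / r) ^ (n-1) = Real.exp (((n:ℝ)-1) * ck) / (r:ℝ)^(n-1) := by
      rw [div_pow, ← Real.exp_nat_mul, hcast1]
    have hm : (∏ j ∈ Finset.Icc 2 (k - 1), (Real.exp (c j) / r) ^ (n - 2))
        = Real.exp (((n:ℝ)-2) * ∑ j ∈ Finset.Icc 2 (k-1), c j) / (r:ℝ)^((n-2)*(k-2)) := by
      have : ∀ j, (Real.exp (c j) / r) ^ (n - 2)
          = Real.exp (((n:ℝ)-2) * c j) / (r:ℝ)^(n-2) := by
        intro j; rw [div_pow, ← Real.exp_nat_mul, hcast2]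
      rw [Finset.prod_congr rfl fun j _ => this j, Finset.prod_div_distrib,
        ← Real.exp_sum, ← Finset.mul_sum, Finset.prod_const]
      have hcard : (Finset.Icc 2 (k-1)).card = k - 2 := by
        rw [Nat.card_Icc]; omega
      rw [hcard, ← pow_mul]
    rw [h1, hk', hm, hsum, hE, hA]
    rw [Real.exp_add, Real.exp_add]
    rw [pow_add, pow_add]
    field_simp
  -- the r power on RHS
  have hpow : (r : ℝ) ^ (-((k * (n - 2) : ℕ) : ℤ) - 2) = 1 / (r:ℝ) ^ A := by
    have hA2 : A = k * (n - 2) + 2 := by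
      obtain ⟨a, rfl⟩ : ∃ a, n = a + 3 := ⟨n - 3, by omega⟩
      obtain ⟨b, rfl⟩ : ∃ b, k = b + 2 := ⟨k - 2, by omega⟩
      show (a+2) + (a+1)*b + (a+2) = (b+2)*(a+1) + 2
      ring
    have hAeq : (A : ℤ) = ((k * (n - 2) : ℕ) : ℤ) + 2 := by
      rw [hA2]; push_cast; ring
    rw [show (-((k * (n - 2) : ℕ) : ℤ) - 2) = -(A:ℤ) by omega]
    rw [zpow_neg, zpow_natCast, one_div]
  -- exponent comparison
  set T : ℝ := ((n : ℝ) - 2) * (-(p * k) + ((k : ℝ) - 1) * p * r / ((r : ℝ) - 1)) +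
      2 * p / ((r : ℝ) - 1) with hT
  have hT' : T = ((n:ℝ)-2) * (-(p * (k:ℝ)) + ((k:ℝ) - 1) * ((r:ℝ) * q)) + 2*q := by
    rw [hT, hqdef]
    have hne : ((r:ℝ) - 1) ≠ 0 := ne_of_gt hr1
    field_simp
  have hET : E ≤ T :=
    chain_exp_aux p (r:ℝ) q T E c1 ck (y (k-1)) (y 1) (n:ℝ) (k:ℝ)
      hqp hT' hE hc1 hck hy1.2 hyk.1 hrpos
  -- conclude
  calc ((1 - p) / r + y 1) ^ (n - 1) *
        (∏ j ∈ Finset.Icc 2 (k - 1),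
          ((1 - p) / r + y j + q - y (j - 1)) ^ (n - 2)) *
        ((1 - p) / r + q - y (k - 1)) ^ (n - 1)
      ≤ Real.exp E / (r:ℝ) ^ A := step1.trans_eq step2
    _ ≤ Real.exp T / (r:ℝ) ^ A := by
        gcongr
    _ = (r : ℝ) ^ (-((k * (n - 2) : ℕ) : ℤ) - 2) * Real.exp T := by
        rw [hpow]; ring
end
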